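/- arXiv:1101.0033 — 2 statements merged into one kernel-verified Lean document; each statement's English description precedes it below -/
import Mathlib

section
/- Let d, m, n ≥ 1 be integers and let a : ({1,…,d} → {1,…,n}) × ({1,…,d} → {1,…,n}) → ℂ. Let ρ and δ be ε_d-partitions of [2dm]. For functions K, L : [2dm] → {1,…,n}, write K = (k₁,…,k_{2m}) and L = (l₁,…,l_{2m}) where k_j(t) = K((j−1)d + t) and l_j(t) = L((j−1)d + t). Then Σ_{K, L : [2dm] → {1,…,n}, ker K ≥ ρ, ker L ≥ δ} |a(k₁,l₁)|·|a(k₂,l₂)|···|a(k_{2m},l_{2m})| ≤ (Σ_{k,l : {1,…,d} → {1,…,n}} |a(k,l)|²)^m. -/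
open Finset

/-- Two elements lie in the same block of the partition `P`. -/
def SameBlock {N : ℕ} (P : Finpartition (univ : Finset (Fin N))) (s t : Fin N) : Prop :=
  ∃ B ∈ P.parts, s ∈ B ∧ t ∈ B

/-- A partition of `[N]` is non-crossing if there are no `s₁ < t₁ < s₂ < t₂` with
`s₁ ∼ s₂`, `t₁ ∼ t₂` but `s₁ ≁ t₁`. -/
def NonCrossing {N : ℕ} (P : Finpartition (univ : Finset (Fin N))) : Prop :=
  ∀ s₁ t₁ s₂ t₂ : Fin N, s₁ < t₁ → t₁ < s₂ → s₂ < t₂ →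
    SameBlock P s₁ s₂ → SameBlock P t₁ t₂ → SameBlock P s₁ t₁

/-- Every block has even cardinality. -/
def EvenPartition {N : ℕ} (P : Finpartition (univ : Finset (Fin N))) : Prop :=
  ∀ B ∈ P.parts, Even B.card

/-- The (two-valued) function `ε` alternates along each block of `P`, listed in
increasing order. -/
def Alternating {N : ℕ} (ε : Fin N → Bool) (P : Finpartition (univ : Finset (Fin N))) : Prop :=
  ∀ B ∈ P.parts, (Finset.sort B (· ≤ ·)).Chain' (fun a b => ε a ≠ ε b)

/-- An `ε`-partition: an even partition on each block of which `ε` alternates. -/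
def EpsPartition {N : ℕ} (ε : Fin N → Bool) (P : Finpartition (univ : Finset (Fin N))) : Prop :=
  EvenPartition P ∧ Alternating ε P

/-- A pairing: every block has exactly two elements. -/
def IsPairing {N : ℕ} (P : Finpartition (univ : Finset (Fin N))) : Prop :=
  ∀ B ∈ P.parts, B.card = 2

/-- `σ` refines `π`: every block of `σ` is contained in a block of `π` (i.e. `σ ≤ π`). -/
def Refines {N : ℕ} (σ π : Finpartition (univ : Finset (Fin N))) : Prop :=
  ∀ B ∈ σ.parts, ∃ C ∈ π.parts, B ⊆ C

/-- The pattern `ε_d = (1^d ∗^d)^m` on `[2dm]` (0-based; `true` codes `1`, `false` codes `∗`). -/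
def epsd (d m : ℕ) : Fin (2*d*m) → Bool := fun j => decide ((j : ℕ) / d % 2 = 0)

/-- `ker I ≥ π` : the function `I` is constant on every block of `π`. -/
def KerGe {N : ℕ} {Λ : Type*} (π : Finpartition (univ : Finset (Fin N))) (I : Fin N → Λ) : Prop :=
  ∀ B ∈ π.parts, ∀ s ∈ B, ∀ t ∈ B, I s = I t

/-- The position `(j-1)d + l` in `[2dm]`, splitting `[2dm]` into `2m` consecutive
segments of length `d`. -/
def seg (d m : ℕ) (j : Fin (2*m)) (l : Fin d) : Fin (2*d*m) :=
  ⟨j.1 * d + l.1, by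
    have hj : j.1 + 1 ≤ 2*m := j.2
    have hl : l.1 < d := l.2
    calc j.1 * d + l.1 < j.1 * d + d := by linarith
      _ = (j.1 + 1) * d := by ring
      _ ≤ (2*m) * d := Nat.mul_le_mul_right d hj
      _ = 2*d*m := by ring⟩

namespace BivAux

lemma div2d_lt {d m : ℕ} (hd : 0 < d) (s : Fin (2*d*m)) : s.1 / (2*d) < m := by
  rw [Nat.div_lt_iff_lt_mul (by omega : 0 < 2*d)]
  have h3 : 2*d*m = m*(2*d) := by ring
  have := s.2
  linarith

/-- decode a function on `[2dm]` from values indexed by `(segment half-index, position)`. -/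
def vdec (d m n : ℕ) (hd : 0 < d) (x : Fin m → Fin d → Fin n) (s : Fin (2*d*m)) : Fin n :=
  x ⟨s.1 / (2*d), div2d_lt hd s⟩ ⟨s.1 % d, Nat.mod_lt _ hd⟩

def jb (m : ℕ) (b : Bool) (i : Fin m) : Fin (2*m) :=
  ⟨2*i.1 + (if b then 0 else 1), by have := i.2; split <;> omega⟩

lemma eps_seg (d m : ℕ) (hd : 0 < d) (j : Fin (2*m)) (t : Fin d) :
    epsd d m (seg d m j t) = decide (j.1 % 2 = 0) := by
  have h : (j.1*d + t.1)/d = j.1 := by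
    rw [mul_comm, Nat.mul_add_div hd, Nat.div_eq_of_lt t.2, add_zero]
  simp only [epsd, seg, h]

lemma eps_jb (d m : ℕ) (hd : 0 < d) (b : Bool) (i : Fin m) (t : Fin d) :
    epsd d m (seg d m (jb m b i) t) = b := by
  rw [eps_seg d m hd]
  cases b <;> simp [jb] <;> omega

lemma vdec_eq {d m n : ℕ} (hd : 0 < d) (x : Fin m → Fin d → Fin n) (s : Fin (2*d*m))
    (i : Fin m) (t : Fin d) (h1 : s.1/(2*d) = i.1) (h2 : s.1 % d = t.1) :
    vdec d m n hd x s = x i t := by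
  obtain ⟨iv, hiv⟩ := i
  obtain ⟨tv, htv⟩ := t
  simp only at h1 h2
  subst h1; subst h2
  rfl

lemma vdec_seg {d m n : ℕ} (hd : 0 < d) (x : Fin m → Fin d → Fin n) (b : Bool)
    (i : Fin m) (t : Fin d) :
    vdec d m n hd x (seg d m (jb m b i) t) = x i t := by
  apply vdec_eq
  · show ((2*i.1 + if b then 0 else 1) * d + t.1) / (2*d) = i.1
    have hr : (2*i.1 + if b then 0 else 1) * d + t.1
        = 2*d*i.1 + ((if b then 0 else 1)*d + t.1) := by ring
    rw [hr, Nat.mul_add_div (by omega : 0 < 2*d), Nat.div_eq_of_lt, add_zero]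
    have := t.2; split <;> omega
  · show ((2*i.1 + if b then 0 else 1) * d + t.1) % d = t.1
    rw [mul_comm _ d, Nat.mul_add_mod, Nat.mod_eq_of_lt t.2]

lemma seg_surj (d m : ℕ) (hd : 0 < d) (b : Bool) (s : Fin (2*d*m))
    (h : epsd d m s = b) : ∃ i t, seg d m (jb m b i) t = s := by
  refine ⟨⟨s.1/(2*d), div2d_lt hd s⟩, ⟨s.1 % d, Nat.mod_lt _ hd⟩, ?_⟩
  apply Fin.ext
  show (2*(s.1/(2*d)) + if b then 0 else 1) * d + s.1 % d = s.1
  have h4 : s.1/(2*d) = s.1/d/2 := by rw [Nat.div_div_eq_div_mul, mul_comm d 2]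
  have hdm : d * (s.1/d) + s.1 % d = s.1 := Nat.div_add_mod s.1 d
  simp only [epsd] at h
  rw [h4]
  generalize hg : s.1/d = q at h hdm
  cases b
  · have hq : q % 2 = 1 := by simp at h; omega
    have h6 : 2*(q/2) + (if false then 0 else 1) = q := by simp; omega
    rw [h6, mul_comm]
    exact hdm
  · have hq : q % 2 = 0 := by simpa using h
    have h6 : 2*(q/2) + (if true then 0 else 1) = q := by simp; omega
    rw [h6, mul_comm]
    exact hdm

/-- extend values on half the segments (selected by `b`) to a `Φ`-invariant function. -/
def extb (d m n : ℕ) (hd : 0 < d) (Φ : Fin (2*d*m) → Fin (2*d*m)) (b : Bool)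
    (x : Fin m → Fin d → Fin n) (s : Fin (2*d*m)) : Fin n :=
  if epsd d m s = b then vdec d m n hd x s else vdec d m n hd x (Φ s)

lemma dec_extb {d m n : ℕ} (hd : 0 < d) (Φ : Fin (2*d*m) → Fin (2*d*m)) (b : Bool)
    (x : Fin m → Fin d → Fin n) (i : Fin m) (t : Fin d) :
    extb d m n hd Φ b x (seg d m (jb m b i) t) = x i t := by
  rw [extb, if_pos (eps_jb d m hd b i t), vdec_seg]

lemma extb_comp {d m n : ℕ} (hd : 0 < d) (Φ : Fin (2*d*m) → Fin (2*d*m))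
    (hΦ1 : ∀ s, Φ (Φ s) = s) (hΦ2 : ∀ s, epsd d m (Φ s) = !(epsd d m s)) (b : Bool)
    (x : Fin m → Fin d → Fin n) :
    (extb d m n hd Φ b x) ∘ Φ = extb d m n hd Φ b x := by
  funext s
  simp only [Function.comp_apply, extb]
  by_cases h : epsd d m s = b
  · rw [if_pos h, hΦ2, h, if_neg (by cases b <;> simp), hΦ1]
  · rw [if_neg h, if_pos (by rw [hΦ2]; cases hx : epsd d m s <;> cases b <;> simp_all)]

lemma extb_dec {d m n : ℕ} (hd : 0 < d) (Φ : Fin (2*d*m) → Fin (2*d*m))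
    (hΦ2 : ∀ s, epsd d m (Φ s) = !(epsd d m s)) (b : Bool)
    (K : Fin (2*d*m) → Fin n) (hK : K ∘ Φ = K) :
    extb d m n hd Φ b (fun i t => K (seg d m (jb m b i) t)) = K := by
  have key : ∀ u : Fin (2*d*m), epsd d m u = b →
      vdec d m n hd (fun i t => K (seg d m (jb m b i) t)) u = K u := by
    intro u hu
    obtain ⟨i, t, hit⟩ := seg_surj d m hd b u hu
    rw [← hit, vdec_seg]
  funext s
  by_cases h : epsd d m s = b
  · rw [extb, if_pos h, key s h]
  · rw [extb, if_neg h,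
      key (Φ s) (by rw [hΦ2]; cases hx : epsd d m s <;> cases b <;> simp_all),
      ← Function.comp_apply (f := K) (g := Φ), hK]

lemma sum_ext {M : Type*} [AddCommMonoid M] (d m n : ℕ) (hd : 0 < d)
    (Φ : Fin (2*d*m) → Fin (2*d*m)) (hΦ1 : ∀ s, Φ (Φ s) = s)
    (hΦ2 : ∀ s, epsd d m (Φ s) = !(epsd d m s)) (b : Bool)
    (f : (Fin (2*d*m) → Fin n) → M) :
    ∑ K ∈ univ.filter (fun K : Fin (2*d*m) → Fin n => K ∘ Φ = K), f K
      = ∑ x : Fin m → Fin d → Fin n, f (extb d m n hd Φ b x) := by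
  refine Finset.sum_nbij' (fun K i t => K (seg d m (jb m b i) t)) (extb d m n hd Φ b)
    (fun K _ => mem_univ _) (fun x _ => ?_) (fun K hK => ?_) (fun x _ => ?_) (fun K hK => ?_)
  · rw [mem_filter]
    exact ⟨mem_univ _, extb_comp hd Φ hΦ1 hΦ2 b x⟩
  · exact extb_dec hd Φ hΦ2 b K ((mem_filter.1 hK).2)
  · funext i t; exact dec_extb hd Φ b x i t
  · rw [extb_dec hd Φ hΦ2 b K ((mem_filter.1 hK).2)]

/-- the "odd segments" value map. -/
def Pmap (d m n : ℕ) (hd : 0 < d) (Φ : Fin (2*d*m) → Fin (2*d*m))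
    (x : Fin m → Fin d → Fin n) (i : Fin m) (t : Fin d) : Fin n :=
  vdec d m n hd x (Φ (seg d m (jb m false i) t))

lemma Pmap_inj {d m n : ℕ} (hd : 0 < d) (Φ : Fin (2*d*m) → Fin (2*d*m))
    (hΦ1 : ∀ s, Φ (Φ s) = s) (hΦ2 : ∀ s, epsd d m (Φ s) = !(epsd d m s)) :
    Function.Injective (Pmap d m n hd Φ) := by
  intro x x' h
  funext i t
  have hεu : epsd d m (seg d m (jb m true i) t) = true := eps_jb d m hd true i t
  have hεs : epsd d m (Φ (seg d m (jb m true i) t)) = false := by rw [hΦ2, hεu]; rfl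
  obtain ⟨i', t', hit⟩ := seg_surj d m hd false _ hεs
  have e1 : ∀ y : Fin m → Fin d → Fin n, Pmap d m n hd Φ y i' t' = y i t := by
    intro y
    rw [Pmap, hit, hΦ1, vdec_seg]
  rw [← e1 x, ← e1 x', h]

lemma jb_true_val (m : ℕ) (i : Fin m) : (jb m true i).1 = 2*i.1 := by simp [jb]

lemma jb_false_val (m : ℕ) (i : Fin m) : (jb m false i).1 = 2*i.1 + 1 := by simp [jb]

def hf (m : ℕ) (j : Fin (2*m)) : Fin m := ⟨j.1/2, by have := j.2; omega⟩

lemma hf_val (m : ℕ) (j : Fin (2*m)) : (hf m j).1 = j.1/2 := rfl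

lemma prod_split {M : Type*} [CommMonoid M] (m : ℕ) (c : Fin (2*m) → M) :
    ∏ j, c j = (∏ i : Fin m, c (jb m true i)) * ∏ i : Fin m, c (jb m false i) := by
  classical
  rw [← Finset.prod_filter_mul_prod_filter_not univ (fun j : Fin (2*m) => (j:ℕ) % 2 = 0) c]
  congr 1
  · refine Finset.prod_nbij' (hf m) (jb m true)
      (fun j _ => mem_univ _) (fun i _ => ?_) (fun j hj => ?_) (fun i _ => ?_) (fun j hj => ?_)
    · simp only [mem_filter, mem_univ, true_and, jb_true_val]
      omega
    · simp only [mem_filter, mem_univ, true_and] at hj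
      apply Fin.ext
      rw [jb_true_val, hf_val]
      omega
    · apply Fin.ext
      rw [hf_val, jb_true_val]
      omega
    · simp only [mem_filter, mem_univ, true_and] at hj
      congr 1
      apply Fin.ext
      rw [jb_true_val, hf_val]
      omega
  · refine Finset.prod_nbij' (hf m) (jb m false)
      (fun j _ => mem_univ _) (fun i _ => ?_) (fun j hj => ?_) (fun i _ => ?_) (fun j hj => ?_)
    · simp only [mem_filter, mem_univ, true_and, jb_false_val]
      omega
    · simp only [mem_filter, mem_univ, true_and] at hj
      apply Fin.ext
      rw [jb_false_val, hf_val]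
      omega
    · apply Fin.ext
      rw [hf_val, jb_false_val]
      omega
    · simp only [mem_filter, mem_univ, true_and] at hj
      congr 1
      apply Fin.ext
      rw [jb_false_val, hf_val]
      omega

lemma sum_pow {M : Type*} [CommSemiring M] {Y : Type*} [Fintype Y] (m : ℕ) (h : Y → M) :
    ∑ g : Fin m → Y, ∏ i, h (g i) = (∑ y, h y) ^ m := by
  classical
  have h1 : (∑ y, h y) ^ m = ∏ _i : Fin m, ∑ y, h y := by
    rw [Finset.prod_const, Finset.card_univ, Fintype.card_fin]
  rw [h1, Finset.prod_univ_sum, Fintype.piFinset_univ]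

lemma count_alt : ∀ (l : List Bool), l.Chain' (· ≠ ·) → Even l.length →
    l.count true = l.count false
  | [] => fun _ _ => rfl
  | [a] => fun _ h => by simp at h
  | a :: b :: t => fun hc he => by
      obtain ⟨hab, hc'⟩ := List.isChain_cons_cons.mp hc
      have ht := hc'.tail
      have he' : Even t.length := by
        simp only [List.length_cons] at he
        rcases he with ⟨k, hk⟩
        exact ⟨k - 1, by omega⟩
      have ih := count_alt t ht he'
      cases a <;> cases b <;> simp_all [List.count_cons] <;> omega


lemma extb_odd {d m n : ℕ} (hd : 0 < d) (Φ : Fin (2*d*m) → Fin (2*d*m))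
    (x : Fin m → Fin d → Fin n) (i : Fin m) (t : Fin d) :
    extb d m n hd Φ true x (seg d m (jb m false i) t) = Pmap d m n hd Φ x i t := by
  rw [extb, if_neg (by rw [eps_jb d m hd]; simp)]
  rfl

lemma sum_prod_sq (d m n : ℕ) (w : (Fin d → Fin n) × (Fin d → Fin n) → ℝ) (m' : ℕ) :
    ∑ z : (Fin m' → Fin d → Fin n) × (Fin m' → Fin d → Fin n), ∏ i : Fin m', w (z.1 i, z.2 i)
      = (∑ kl : (Fin d → Fin n) × (Fin d → Fin n), w kl) ^ m' := by
  rw [← sum_pow m' w]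
  exact (Fintype.sum_equiv (Equiv.arrowProdEquivProdArrow (Fin m') (fun _ => Fin d → Fin n) (fun _ => Fin d → Fin n))
    (fun q => ∏ i, w (q i)) (fun z => ∏ i, w (z.1 i, z.2 i))
    (fun q => by simp [Equiv.arrowProdEquivProdArrow])).symm


lemma filter_card_eq {N : ℕ} (ε : Fin N → Bool) (B : Finset (Fin N))
    (halt : (Finset.sort B (· ≤ ·)).Chain' (fun a b => ε a ≠ ε b)) (heven : Even B.card) :
    (B.filter (fun s => ε s = true)).card = (B.filter (fun s => ε s = false)).card := by
  classical
  have hl : ((Finset.sort B (· ≤ ·)).map ε).Chain' (· ≠ ·) := (List.isChain_map ε).mpr halt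
  have hlen : Even ((Finset.sort B (· ≤ ·)).map ε).length := by
    simpa [Finset.length_sort] using heven
  have hcount := count_alt _ hl hlen
  -- convert counts to filter cards
  have key : ∀ bv : Bool, (B.filter (fun s => ε s = bv)).card
      = ((Finset.sort B (· ≤ ·)).map ε).count bv := by
    intro bv
    rw [List.count_eq_countP, List.countP_map]
    have hperm : (Finset.sort B (· ≤ ·)).countP ((· == bv) ∘ ε)
        = B.toList.countP ((· == bv) ∘ ε) :=
      (Finset.sort_perm_toList (s := B) (r := (· ≤ ·))).countP_eq _
    rw [hperm]
    have h2 : List.countP ((· == bv) ∘ ε) B.toList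
        = Multiset.countP (fun s => ε s = bv) B.val := by
      conv_rhs => rw [← Finset.coe_toList B]
      rw [Multiset.coe_countP]
      apply List.countP_congr
      intro a _
      simp [Function.comp]
    rw [h2, Multiset.countP_eq_card_filter, ← Finset.filter_val]
    rfl
  rw [key true, key false, hcount]


lemma exists_pairing {N : ℕ} (ε : Fin N → Bool) (P : Finpartition (univ : Finset (Fin N)))
    (hP : EpsPartition ε P) :
    ∃ Φ : Fin N → Fin N, (∀ s, Φ (Φ s) = s) ∧ (∀ s, ε (Φ s) = !(ε s)) ∧
      (∀ s, SameBlock P s (Φ s)) := by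
  classical
  have hex : ∀ B, B ∈ P.parts →
      ∃ φ : Fin N → Fin N, ∀ s ∈ B, φ s ∈ B ∧ ε (φ s) = !(ε s) ∧ φ (φ s) = s := by
    intro B hB
    have hcard := filter_card_eq ε B (hP.2 B hB) (hP.1 B hB)
    let e : {x // x ∈ B.filter (fun u => ε u = true)} ≃ {x // x ∈ B.filter (fun u => ε u = false)} :=
      Finset.equivOfCardEq hcard
    refine ⟨fun s => if hs : s ∈ B.filter (fun u => ε u = true) then (e ⟨s, hs⟩ : Fin N)
      else if hs' : s ∈ B.filter (fun u => ε u = false) then (e.symm ⟨s, hs'⟩ : Fin N)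
      else s, ?_⟩
    intro s hsB
    dsimp only
    by_cases hε : ε s = true
    · have hs : s ∈ B.filter (fun u => ε u = true) := mem_filter.2 ⟨hsB, hε⟩
      have hφ : (if hs : s ∈ B.filter (fun u => ε u = true) then ((e ⟨s, hs⟩ : Fin N))
          else if hs' : s ∈ B.filter (fun u => ε u = false) then (e.symm ⟨s, hs'⟩ : Fin N)
          else s) = (e ⟨s, hs⟩ : Fin N) := dif_pos hs
      have hmem : ((e ⟨s, hs⟩ : Fin N)) ∈ B.filter (fun u => ε u = false) := (e ⟨s, hs⟩).2
      obtain ⟨hmB, hmε⟩ := mem_filter.1 hmem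
      rw [hφ]
      refine ⟨hmB, by rw [hmε, hε]; rfl, ?_⟩
      have hnot : (e ⟨s, hs⟩ : Fin N) ∉ B.filter (fun u => ε u = true) := by
        intro hcon
        rw [(mem_filter.1 hcon).2] at hmε
        exact absurd hmε (by simp)
      rw [dif_neg hnot, dif_pos hmem]
      have : (⟨(e ⟨s, hs⟩ : Fin N), hmem⟩ : {x // x ∈ B.filter (fun u => ε u = false)})
          = e ⟨s, hs⟩ := rfl
      rw [this, Equiv.symm_apply_apply]
    · have hε' : ε s = false := by simpa using hε
      have hs' : s ∈ B.filter (fun u => ε u = false) := mem_filter.2 ⟨hsB, hε'⟩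
      have hnot : s ∉ B.filter (fun u => ε u = true) := by
        intro hcon
        rw [(mem_filter.1 hcon).2] at hε'
        exact absurd hε' (by simp)
      have hφ : (if hs : s ∈ B.filter (fun u => ε u = true) then ((e ⟨s, hs⟩ : Fin N))
          else if hs'' : s ∈ B.filter (fun u => ε u = false) then (e.symm ⟨s, hs''⟩ : Fin N)
          else s) = (e.symm ⟨s, hs'⟩ : Fin N) := by rw [dif_neg hnot, dif_pos hs']
      have hmem : ((e.symm ⟨s, hs'⟩ : Fin N)) ∈ B.filter (fun u => ε u = true) :=
        (e.symm ⟨s, hs'⟩).2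
      obtain ⟨hmB, hmε⟩ := mem_filter.1 hmem
      rw [hφ]
      refine ⟨hmB, by rw [hmε, hε']; rfl, ?_⟩
      rw [dif_pos hmem]
      have : (⟨(e.symm ⟨s, hs'⟩ : Fin N), hmem⟩ : {x // x ∈ B.filter (fun u => ε u = true)})
          = e.symm ⟨s, hs'⟩ := rfl
      rw [this, Equiv.apply_symm_apply]
  choose φ hφ using hex
  let φ' : Finset (Fin N) → Fin N → Fin N := fun B => if h : B ∈ P.parts then φ B h else id
  have hpart : ∀ s : Fin N, P.part s ∈ P.parts := fun s => P.part_mem.2 (mem_univ s)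
  have hmem : ∀ s : Fin N, s ∈ P.part s := fun s => P.mem_part (mem_univ s)
  have hφ'' : ∀ B (hB : B ∈ P.parts) (s : Fin N), φ' B s = φ B hB s := by
    intro B hB s
    simp only [φ', dif_pos hB]
  refine ⟨fun s => φ' (P.part s) s, ?_, ?_, ?_⟩
  · intro s
    dsimp only
    have h1 := hφ (P.part s) (hpart s) s (hmem s)
    have heq : P.part (φ' (P.part s) s) = P.part s := by
      apply P.part_eq_of_mem (hpart s)
      rw [hφ'' _ (hpart s)]
      exact h1.1
    simp only [heq]
    rw [hφ'' _ (hpart s), hφ'' _ (hpart s)]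
    exact h1.2.2
  · intro s
    dsimp only
    have h1 := hφ (P.part s) (hpart s) s (hmem s)
    rw [hφ'' _ (hpart s)]
    exact h1.2.1
  · intro s
    dsimp only
    have h1 := hφ (P.part s) (hpart s) s (hmem s)
    exact ⟨P.part s, hpart s, hmem s, by rw [hφ'' _ (hpart s)]; exact h1.1⟩


end BivAux

/-- bivariate estimate from the proof of Theorem 4.1 of the paper:
for `ε_d`-partitions `ρ, δ` of `[2dm]`,
`Σ_{ker K ≥ ρ, ker L ≥ δ} |a(k₁,l₁)|⋯|a(k_{2m},l_{2m})| ≤ (Σ_{k,l} |a(k,l)|²)^m`. -/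
theorem bivariate_scalars_partial_sum_estimate (d m n : ℕ) (hd : 1 ≤ d) (hm : 1 ≤ m)
    (hn : 1 ≤ n)
    (a : (Fin d → Fin n) × (Fin d → Fin n) → ℂ)
    (ρ δ : Finpartition (univ : Finset (Fin (2*d*m))))
    (hρ : EpsPartition (epsd d m) ρ) (hδ : EpsPartition (epsd d m) δ) :
    (∑ᶠ KL ∈ {KL : (Fin (2*d*m) → Fin n) × (Fin (2*d*m) → Fin n) |
          KerGe ρ KL.1 ∧ KerGe δ KL.2},
        ∏ j : Fin (2*m),
          ‖a (fun t => KL.1 (seg d m j t), fun t => KL.2 (seg d m j t))‖) ≤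
      (∑ kl : (Fin d → Fin n) × (Fin d → Fin n), ‖a kl‖ ^ 2) ^ m := by
  classical
  have hd0 : 0 < d := hd
  obtain ⟨Φρ, hρ1, hρ2, hρ3⟩ := BivAux.exists_pairing (epsd d m) ρ hρ
  obtain ⟨Φδ, hδ1, hδ2, hδ3⟩ := BivAux.exists_pairing (epsd d m) δ hδ
  have hset : {KL : (Fin (2*d*m) → Fin n) × (Fin (2*d*m) → Fin n) |
        KerGe ρ KL.1 ∧ KerGe δ KL.2}
      = ↑(univ.filter (fun KL : (Fin (2*d*m) → Fin n) × (Fin (2*d*m) → Fin n) =>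
          KerGe ρ KL.1 ∧ KerGe δ KL.2)) := by
    ext KL; simp
  rw [hset, finsum_mem_coe_finset]
  have hFnonneg : ∀ KL : (Fin (2*d*m) → Fin n) × (Fin (2*d*m) → Fin n),
      0 ≤ ∏ j : Fin (2*m),
        ‖a (fun t => KL.1 (seg d m j t), fun t => KL.2 (seg d m j t))‖ :=
    fun KL => Finset.prod_nonneg (fun j _ => norm_nonneg _)
  have hsub : (univ.filter (fun KL : (Fin (2*d*m) → Fin n) × (Fin (2*d*m) → Fin n) =>
        KerGe ρ KL.1 ∧ KerGe δ KL.2))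
      ⊆ (univ.filter (fun KL : (Fin (2*d*m) → Fin n) × (Fin (2*d*m) → Fin n) =>
        KL.1 ∘ Φρ = KL.1 ∧ KL.2 ∘ Φδ = KL.2)) := by
    intro KL hKL
    rw [mem_filter] at hKL ⊢
    obtain ⟨-, h1, h2⟩ := hKL
    refine ⟨mem_univ _, ?_, ?_⟩
    · funext s
      obtain ⟨B, hB, hsB, hφB⟩ := hρ3 s
      exact h1 B hB (Φρ s) hφB s hsB
    · funext s
      obtain ⟨B, hB, hsB, hφB⟩ := hδ3 s
      exact h2 B hB (Φδ s) hφB s hsB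
  refine le_trans (Finset.sum_le_sum_of_subset_of_nonneg hsub
    (fun KL _ _ => hFnonneg KL)) ?_
  have hprod : (univ.filter (fun KL : (Fin (2*d*m) → Fin n) × (Fin (2*d*m) → Fin n) =>
        KL.1 ∘ Φρ = KL.1 ∧ KL.2 ∘ Φδ = KL.2))
      = (univ.filter (fun K : Fin (2*d*m) → Fin n => K ∘ Φρ = K))
        ×ˢ (univ.filter (fun L : Fin (2*d*m) → Fin n => L ∘ Φδ = L)) := by
    ext KL
    simp only [mem_filter, mem_univ, true_and, mem_product]
  rw [hprod, Finset.sum_product]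
  rw [BivAux.sum_ext d m n hd0 Φρ hρ1 hρ2 true]
  have hinner : ∀ x : Fin m → Fin d → Fin n,
      ∑ L ∈ univ.filter (fun L : Fin (2*d*m) → Fin n => L ∘ Φδ = L),
        ∏ j : Fin (2*m), ‖a
          (fun t => BivAux.extb d m n hd0 Φρ true x (seg d m j t), fun t => L (seg d m j t))‖
      = ∑ y : Fin m → Fin d → Fin n,
        ∏ j : Fin (2*m), ‖a
          (fun t => BivAux.extb d m n hd0 Φρ true x (seg d m j t),
           fun t => BivAux.extb d m n hd0 Φδ true y (seg d m j t))‖ :=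
    fun x => BivAux.sum_ext d m n hd0 Φδ hδ1 hδ2 true _
  rw [Finset.sum_congr rfl (fun x _ => hinner x)]
  have hsplit : ∀ x y : Fin m → Fin d → Fin n,
      (∏ j : Fin (2*m), ‖a
          (fun t => BivAux.extb d m n hd0 Φρ true x (seg d m j t),
           fun t => BivAux.extb d m n hd0 Φδ true y (seg d m j t))‖)
      = (∏ i : Fin m, ‖a (x i, y i)‖)
        * ∏ i : Fin m, ‖a
            (BivAux.Pmap d m n hd0 Φρ x i, BivAux.Pmap d m n hd0 Φδ y i)‖ := by
    intro x y
    rw [BivAux.prod_split m]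
    congr 1
    · refine Finset.prod_congr rfl (fun i _ => ?_)
      have e1 : (fun t => BivAux.extb d m n hd0 Φρ true x (seg d m (BivAux.jb m true i) t))
          = x i := funext fun t => BivAux.dec_extb hd0 Φρ true x i t
      have e2 : (fun t => BivAux.extb d m n hd0 Φδ true y (seg d m (BivAux.jb m true i) t))
          = y i := funext fun t => BivAux.dec_extb hd0 Φδ true y i t
      rw [e1, e2]
    · refine Finset.prod_congr rfl (fun i _ => ?_)
      have e1 : (fun t => BivAux.extb d m n hd0 Φρ true x (seg d m (BivAux.jb m false i) t))
          = BivAux.Pmap d m n hd0 Φρ x i := funext fun t => BivAux.extb_odd hd0 Φρ x i t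
      have e2 : (fun t => BivAux.extb d m n hd0 Φδ true y (seg d m (BivAux.jb m false i) t))
          = BivAux.Pmap d m n hd0 Φδ y i := funext fun t => BivAux.extb_odd hd0 Φδ y i t
      rw [e1, e2]
  rw [Finset.sum_congr rfl (fun x _ => Finset.sum_congr rfl (fun y _ => hsplit x y))]
  rw [← Finset.sum_product' univ univ (fun x y =>
    (∏ i : Fin m, ‖a (x i, y i)‖)
      * ∏ i : Fin m, ‖a
          (BivAux.Pmap d m n hd0 Φρ x i, BivAux.Pmap d m n hd0 Φδ y i)‖)]
  rw [Finset.univ_product_univ]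
  set S : ℝ := ∑ kl : (Fin d → Fin n) × (Fin d → Fin n), ‖a kl‖ ^ 2 with hS
  have hA2 : ∑ z : (Fin m → Fin d → Fin n) × (Fin m → Fin d → Fin n),
      (∏ i : Fin m, ‖a (z.1 i, z.2 i)‖) ^ 2 = S ^ m := by
    rw [hS, ← BivAux.sum_prod_sq d m n (fun kl => ‖a kl‖ ^ 2) m]
    exact Finset.sum_congr rfl (fun z _ => (Finset.prod_pow univ 2 _).symm)
  have hbijρ : Function.Bijective (BivAux.Pmap d m n hd0 Φρ) :=
    Finite.injective_iff_bijective.1 (BivAux.Pmap_inj hd0 Φρ hρ1 hρ2)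
  have hbijδ : Function.Bijective (BivAux.Pmap d m n hd0 Φδ) :=
    Finite.injective_iff_bijective.1 (BivAux.Pmap_inj hd0 Φδ hδ1 hδ2)
  have hB2 : ∑ z : (Fin m → Fin d → Fin n) × (Fin m → Fin d → Fin n),
      (∏ i : Fin m, ‖a
        (BivAux.Pmap d m n hd0 Φρ z.1 i, BivAux.Pmap d m n hd0 Φδ z.2 i)‖) ^ 2 = S ^ m := by
    rw [Fintype.sum_bijective (Prod.map (BivAux.Pmap d m n hd0 Φρ) (BivAux.Pmap d m n hd0 Φδ))
      (hbijρ.prodMap hbijδ)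
      (fun z => (∏ i : Fin m, ‖a
        (BivAux.Pmap d m n hd0 Φρ z.1 i, BivAux.Pmap d m n hd0 Φδ z.2 i)‖) ^ 2)
      (fun z => (∏ i : Fin m, ‖a (z.1 i, z.2 i)‖) ^ 2)
      (fun z => by simp [Prod.map])]
    exact hA2
  have hCS := Finset.sum_mul_sq_le_sq_mul_sq univ
    (fun z : (Fin m → Fin d → Fin n) × (Fin m → Fin d → Fin n) =>
      ∏ i : Fin m, ‖a (z.1 i, z.2 i)‖)
    (fun z => ∏ i : Fin m, ‖a
      (BivAux.Pmap d m n hd0 Φρ z.1 i, BivAux.Pmap d m n hd0 Φδ z.2 i)‖)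
  rw [hA2, hB2] at hCS
  have h0 : 0 ≤ ∑ z : (Fin m → Fin d → Fin n) × (Fin m → Fin d → Fin n),
      (∏ i : Fin m, ‖a (z.1 i, z.2 i)‖)
        * ∏ i : Fin m, ‖a
            (BivAux.Pmap d m n hd0 Φρ z.1 i, BivAux.Pmap d m n hd0 Φδ z.2 i)‖ :=
    Finset.sum_nonneg fun z _ => mul_nonneg
      (Finset.prod_nonneg fun i _ => norm_nonneg _)
      (Finset.prod_nonneg fun i _ => norm_nonneg _)
  have hS0 : 0 ≤ S ^ m := pow_nonneg (Finset.sum_nonneg fun kl _ => sq_nonneg _) m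
  nlinarith [hCS, h0, hS0]
end

section
/- For all integers d, m ≥ 1, the number of non-crossing ε_d-partitions of [2dm] is at most 4^{2m} times the number of non-crossing ε_d-pairings of [2dm]: |NC^{ε_d}(2dm)| ≤ 4^{2m}·|NC₂^{ε_d}(2dm)|. -/
open Finset

namespace NCAux

variable {N : ℕ}

/-- next element of `B` after `x` (junk value `x` if none). -/
def nxt (B : Finset (Fin N)) (x : Fin N) : Fin N :=
  if h : (B.filter (fun z => x < z)).Nonempty then (B.filter (fun z => x < z)).min' h else x

/-- previous element of `B` before `x` (junk value `x` if none). -/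
def prv (B : Finset (Fin N)) (x : Fin N) : Fin N :=
  if h : (B.filter (fun z => z < x)).Nonempty then (B.filter (fun z => z < x)).max' h else x

/-- `x` and `y` are consecutive elements of `B`. -/
def consec (B : Finset (Fin N)) (x y : Fin N) : Prop :=
  x ∈ B ∧ y ∈ B ∧ x < y ∧ ∀ z ∈ B, ¬(x < z ∧ z < y)

/-- one-based rank of `x` in `B`. -/
def rank (B : Finset (Fin N)) (x : Fin N) : ℕ := (B.filter (fun z => z ≤ x)).card

lemma nxt_eq {B : Finset (Fin N)} {x : Fin N} (h : (B.filter (fun z => x < z)).Nonempty) :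
    nxt B x = (B.filter (fun z => x < z)).min' h := dif_pos h

lemma prv_eq {B : Finset (Fin N)} {x : Fin N} (h : (B.filter (fun z => z < x)).Nonempty) :
    prv B x = (B.filter (fun z => z < x)).max' h := dif_pos h

lemma nxt_spec {B : Finset (Fin N)} {x : Fin N} (hx : x ∈ B)
    (h : (B.filter (fun z => x < z)).Nonempty) : consec B x (nxt B x) := by
  rw [nxt_eq h]
  have h1 := Finset.min'_mem _ h
  rw [Finset.mem_filter] at h1
  refine ⟨hx, h1.1, h1.2, ?_⟩
  rintro z hz hzz
  have hm : z ∈ B.filter (fun w => x < w) := Finset.mem_filter.2 ⟨hz, hzz.1⟩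
  have := Finset.min'_le _ z hm
  exact absurd hzz.2 (not_lt.2 this)

lemma nxt_le {B : Finset (Fin N)} {x y : Fin N} (hy : y ∈ B) (hxy : x < y)
    (h : (B.filter (fun z => x < z)).Nonempty) : nxt B x ≤ y := by
  rw [nxt_eq h]
  have hm : y ∈ B.filter (fun w => x < w) := Finset.mem_filter.2 ⟨hy, hxy⟩
  exact Finset.min'_le _ y hm

lemma prv_spec {B : Finset (Fin N)} {x : Fin N} (hx : x ∈ B)
    (h : (B.filter (fun z => z < x)).Nonempty) : consec B (prv B x) x := by
  rw [prv_eq h]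
  have h1 := Finset.max'_mem _ h
  rw [Finset.mem_filter] at h1
  refine ⟨h1.1, hx, h1.2, ?_⟩
  rintro z hz hzz
  have hm : z ∈ B.filter (fun w => w < x) := Finset.mem_filter.2 ⟨hz, hzz.2⟩
  have := Finset.le_max' _ z hm
  exact absurd hzz.1 (not_lt.2 this)

lemma consec_nxt {B : Finset (Fin N)} {x y : Fin N} (h : consec B x y) : nxt B x = y := by
  obtain ⟨hx, hy, hxy, hbet⟩ := h
  have hne : (B.filter (fun z => x < z)).Nonempty := ⟨y, Finset.mem_filter.2 ⟨hy, hxy⟩⟩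
  have h1 := nxt_spec hx hne
  have h2 := nxt_le hy hxy hne
  rcases lt_or_eq_of_le h2 with h3 | h3
  · exact absurd ⟨h1.2.2.1, h3⟩ (hbet _ h1.2.1)
  · exact h3

lemma consec_prv {B : Finset (Fin N)} {x y : Fin N} (h : consec B x y) : prv B y = x := by
  obtain ⟨hx, hy, hxy, hbet⟩ := h
  have hne : (B.filter (fun z => z < y)).Nonempty := ⟨x, Finset.mem_filter.2 ⟨hx, hxy⟩⟩
  have h1 := prv_spec hy hne
  rcases lt_trichotomy (prv B y) x with h3 | h3 | h3
  · exact absurd ⟨h3, hxy⟩ (h1.2.2.2 x hx)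
  · exact h3
  · exact absurd ⟨h3, h1.2.2.1⟩ (hbet _ h1.1)

lemma card_split (B : Finset (Fin N)) (x : Fin N) :
    B.card = rank B x + (B.filter (fun z => x < z)).card := by
  classical
  have hU : B.filter (fun z => z ≤ x) ∪ B.filter (fun z => x < z) = B := by
    rw [← Finset.filter_or]
    simp [le_or_gt]
  have hD : Disjoint (B.filter (fun z => z ≤ x)) (B.filter (fun z => x < z)) := by
    rw [Finset.disjoint_filter]
    intro z _ h1
    exact not_lt.2 h1
  rw [rank, ← Finset.card_union_of_disjoint hD, hU]

lemma rank_pos {B : Finset (Fin N)} {x : Fin N} (hx : x ∈ B) : 0 < rank B x :=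
  Finset.card_pos.2 ⟨x, Finset.mem_filter.2 ⟨hx, le_refl x⟩⟩

lemma rank_le_card (B : Finset (Fin N)) (x : Fin N) : rank B x ≤ B.card :=
  Finset.card_le_card (Finset.filter_subset _ _)

lemma rank_eq_pred_add_one {B : Finset (Fin N)} {x : Fin N} (hx : x ∈ B) :
    rank B x = (B.filter (fun z => z < x)).card + 1 := by
  rw [rank]
  have : B.filter (fun z => z ≤ x) = insert x (B.filter (fun z => z < x)) := by
    ext z
    simp only [Finset.mem_filter, Finset.mem_insert]
    constructor
    · rintro ⟨hz, hzx⟩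
      rcases lt_or_eq_of_le hzx with h | h
      · exact Or.inr ⟨hz, h⟩
      · exact Or.inl h
    · rintro (rfl | ⟨hz, hzx⟩)
      · exact ⟨hx, le_refl _⟩
      · exact ⟨hz, le_of_lt hzx⟩
  rw [this, Finset.card_insert_of_notMem (by simp)]

lemma consec_rank {B : Finset (Fin N)} {x y : Fin N} (h : consec B x y) :
    rank B y = rank B x + 1 := by
  obtain ⟨hx, hy, hxy, hbet⟩ := h
  have : B.filter (fun z => z ≤ y) = insert y (B.filter (fun z => z ≤ x)) := by
    ext z
    simp only [Finset.mem_filter, Finset.mem_insert]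
    constructor
    · rintro ⟨hz, hzy⟩
      rcases lt_or_eq_of_le hzy with h | h
      · refine Or.inr ⟨hz, ?_⟩
        by_contra hc
        exact hbet z hz ⟨lt_of_not_ge hc, h⟩
      · exact Or.inl h
    · rintro (rfl | ⟨hz, hzx⟩)
      · exact ⟨hy, le_refl _⟩
      · exact ⟨hz, le_of_lt (lt_of_le_of_lt hzx hxy)⟩
  rw [rank, this, Finset.card_insert_of_notMem (by simp [not_le.2 hxy]), rank]

lemma nxt_nonempty_iff {B : Finset (Fin N)} (x : Fin N) :
    (B.filter (fun z => x < z)).Nonempty ↔ rank B x < B.card := by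
  have h := card_split B x
  rw [← Finset.card_pos]
  omega

lemma prv_nonempty_iff {B : Finset (Fin N)} {x : Fin N} (hx : x ∈ B) :
    (B.filter (fun z => z < x)).Nonempty ↔ 2 ≤ rank B x := by
  have h := rank_eq_pred_add_one hx
  have h2 := rank_pos hx
  rw [← Finset.card_pos]
  omega


section PartitionLevel

variable {N : ℕ} (π : Finpartition (univ : Finset (Fin N)))

/-- The block of `π` containing `x`. -/
def blk (x : Fin N) : Finset (Fin N) := π.part x

lemma mem_blk (x : Fin N) : x ∈ blk π x := π.mem_part (mem_univ x)

lemma blk_mem (x : Fin N) : blk π x ∈ π.parts := π.part_mem.2 (mem_univ x)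

lemma blk_eq_of_mem {x : Fin N} {B : Finset (Fin N)} (hB : B ∈ π.parts) (hx : x ∈ B) :
    blk π x = B := π.part_eq_of_mem hB hx

lemma sameBlock_iff {x y : Fin N} : SameBlock π x y ↔ y ∈ blk π x := by
  constructor
  · rintro ⟨B, hB, hx, hy⟩
    rw [blk_eq_of_mem π hB hx]
    exact hy
  · intro h
    exact ⟨blk π x, blk_mem π x, mem_blk π x, h⟩

lemma blk_eq_of_sameBlock {x y : Fin N} (h : SameBlock π x y) : blk π y = blk π x :=
  blk_eq_of_mem π (blk_mem π x) ((sameBlock_iff π).1 h)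

lemma sameBlock_of_mem_blk {x y : Fin N} (h : y ∈ blk π x) : SameBlock π x y :=
  (sameBlock_iff π).2 h

/-- Bridge: consecutive elements of a block of an alternating partition have different colors. -/
lemma eps_ne_of_consec {ε : Fin N → Bool} (hA : Alternating ε π) {B : Finset (Fin N)}
    (hB : B ∈ π.parts) {x y : Fin N} (h : consec B x y) : ε x ≠ ε y := by
  obtain ⟨hx, hy, hxy, hbet⟩ := h
  set l := Finset.sort B (· ≤ ·) with hl
  have hxl : x ∈ l := (Finset.mem_sort _).2 hx
  have hyl : y ∈ l := (Finset.mem_sort _).2 hy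
  obtain ⟨i, hix⟩ := List.mem_iff_get.1 hxl
  obtain ⟨j, hjy⟩ := List.mem_iff_get.1 hyl
  have hsort : l.SortedLT := Finset.sortedLT_sort B
  have hmono : ∀ (a b : Fin l.length), a < b → l.get a < l.get b := by
    intro a b hab
    exact (show StrictMono l.get from hsort) hab
  have hij : (i : ℕ) < (j : ℕ) := by
    rcases lt_trichotomy (i : ℕ) (j : ℕ) with h1 | h1 | h1
    · exact h1
    · exfalso
      have hij' : i = j := Fin.ext h1
      rw [hij', hjy] at hix
      exact absurd hix (ne_of_gt hxy)
    · exfalso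
      have := hmono j i (by exact h1)
      rw [hix, hjy] at this
      exact absurd hxy (not_lt.2 (le_of_lt this))
  have hj1 : (j : ℕ) = (i : ℕ) + 1 := by
    by_contra hne
    have hi1 : (i : ℕ) + 1 < l.length := lt_of_le_of_lt (by omega) j.2
    set z := l.get ⟨(i : ℕ) + 1, hi1⟩ with hz
    have hz1 : x < z := by
      rw [← hix]
      exact hmono i ⟨(i : ℕ) + 1, hi1⟩ (by rw [Fin.lt_def]; exact Nat.lt_succ_self _)
    have hz2 : z < y := by
      rw [← hjy]
      refine hmono ⟨(i : ℕ) + 1, hi1⟩ j ?_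
      rw [Fin.lt_def]
      simp only [Fin.val_mk]
      omega
    have hzB : z ∈ B := (Finset.mem_sort (α := Fin N) (· ≤ ·)).1 (List.get_mem l _)
    exact hbet z hzB ⟨hz1, hz2⟩
  have hchain := hA B hB
  have hc2 : List.IsChain (fun a b => ε a ≠ ε b) l := hchain
  rw [List.isChain_iff_getElem] at hc2
  have hj2 : (j : ℕ) < l.length := j.2
  have := hc2 (i : ℕ) (by omega)
  have e1 : l[(i : ℕ)] = l.get i := rfl
  have e2 : l[(i : ℕ) + 1]'(by omega) = l.get j := by simp only [List.get_eq_getElem, hj1]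
  rw [e1, e2, hix, hjy] at this
  exact this

/-- The σ-partner of `x` in its block. -/
def mate (x : Fin N) : Fin N :=
  if Odd (rank (blk π x) x) then nxt (blk π x) x else prv (blk π x) x

variable {π}

lemma mate_consec_odd (hE : EvenPartition π) {x : Fin N} (hodd : Odd (rank (blk π x) x)) :
    consec (blk π x) x (mate π x) := by
  have hxB := mem_blk π x
  have hEB := hE _ (blk_mem π x)
  have hne : ((blk π x).filter (fun z => x < z)).Nonempty := by
    rw [nxt_nonempty_iff]
    have h1 := rank_le_card (blk π x) x
    rcases lt_or_eq_of_le h1 with h | h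
    · exact h
    · exfalso; rw [h] at hodd; exact (Nat.not_odd_iff_even.2 hEB) hodd
  rw [mate, if_pos hodd]
  exact nxt_spec hxB hne

lemma mate_consec_even {x : Fin N} (heven : ¬ Odd (rank (blk π x) x)) :
    consec (blk π x) (mate π x) x := by
  have hxB := mem_blk π x
  have hne : ((blk π x).filter (fun z => z < x)).Nonempty := by
    rw [prv_nonempty_iff hxB]
    have h1 := rank_pos hxB
    rcases Nat.not_odd_iff_even.1 heven with ⟨k, hk⟩
    omega
  rw [mate, if_neg heven]
  exact prv_spec hxB hne

lemma mate_mem (hE : EvenPartition π) (x : Fin N) : mate π x ∈ blk π x := by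
  by_cases h : Odd (rank (blk π x) x)
  · exact (mate_consec_odd hE h).2.1
  · exact (mate_consec_even h).1

lemma mate_ne (hE : EvenPartition π) (x : Fin N) : mate π x ≠ x := by
  by_cases h : Odd (rank (blk π x) x)
  · exact ne_of_gt (mate_consec_odd hE h).2.2.1
  · exact ne_of_lt (mate_consec_even h).2.2.1

lemma blk_mate (hE : EvenPartition π) (x : Fin N) : blk π (mate π x) = blk π x :=
  blk_eq_of_mem π (blk_mem π x) (mate_mem hE x)

lemma sameBlock_mate (hE : EvenPartition π) (x : Fin N) : SameBlock π x (mate π x) :=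
  sameBlock_of_mem_blk π (mate_mem hE x)

lemma rank_mate_odd (hE : EvenPartition π) {x : Fin N} (hodd : Odd (rank (blk π x) x)) :
    rank (blk π x) (mate π x) = rank (blk π x) x + 1 :=
  consec_rank (mate_consec_odd hE hodd)

lemma rank_mate_even {x : Fin N} (heven : ¬ Odd (rank (blk π x) x)) :
    rank (blk π x) x = rank (blk π x) (mate π x) + 1 :=
  consec_rank (mate_consec_even heven)

lemma mate_mate (hE : EvenPartition π) (x : Fin N) : mate π (mate π x) = x := by
  by_cases h : Odd (rank (blk π x) x)
  · have hc := mate_consec_odd hE h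
    have hrk := rank_mate_odd hE h
    have hblk := blk_mate hE x
    have hnodd : ¬ Odd (rank (blk π (mate π x)) (mate π x)) := by
      rw [hblk, hrk]
      simp [Nat.odd_add_one, h]
    have := mate_consec_even hnodd
    rw [hblk] at this
    -- this : consec (blk π x) (mate π (mate π x)) (mate π x)
    have h2 : consec (blk π x) x (mate π x) := hc
    -- both x and mate π (mate π x) are prv of (mate π x)
    have e1 := consec_prv this
    have e2 := consec_prv h2
    rw [e1] at e2
    exact e2
  · have hc := mate_consec_even h
    have hrk := rank_mate_even h
    have hblk := blk_mate hE x
    have hodd2 : Odd (rank (blk π (mate π x)) (mate π x)) := by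
      rw [hblk]
      rcases Nat.even_or_odd (rank (blk π x) (mate π x)) with he | ho
      · exfalso
        apply h
        rw [hrk]
        exact Even.add_one he
      · exact ho
    have := mate_consec_odd hE hodd2
    rw [hblk] at this
    have e1 := consec_nxt this
    have e2 := consec_nxt hc
    rw [e1] at e2
    exact e2

lemma eps_mate_ne {ε : Fin N → Bool} (hE : EvenPartition π) (hA : Alternating ε π) (x : Fin N) :
    ε (mate π x) ≠ ε x := by
  by_cases h : Odd (rank (blk π x) x)
  · exact (eps_ne_of_consec π hA (blk_mem π x) (mate_consec_odd hE h)).symm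
  · exact eps_ne_of_consec π hA (blk_mem π x) (mate_consec_even h)

end PartitionLevel

section Sigma

variable {N : ℕ}

/-- The setoid pairing each element with its mate. -/
def mateSetoid (π : Finpartition (univ : Finset (Fin N))) (hE : EvenPartition π) :
    Setoid (Fin N) where
  r x y := y = x ∨ y = mate π x
  iseqv := by
    refine ⟨fun x => Or.inl rfl, ?_, ?_⟩
    · rintro x y (rfl | rfl)
      · exact Or.inl rfl
      · exact Or.inr (mate_mate hE x).symm
    · intro x y z h1 h2
      rcases h1 with rfl | rfl
      · exact h2
      · rcases h2 with rfl | rfl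
        · exact Or.inr rfl
        · exact Or.inl (mate_mate hE x)

instance mateSetoidDec (π : Finpartition (univ : Finset (Fin N))) (hE : EvenPartition π) :
    DecidableRel (mateSetoid π hE).r :=
  fun x y => inferInstanceAs (Decidable (y = x ∨ y = mate π x))

/-- The non-crossing pairing refining `π`, obtained by pairing consecutive elements in
each block. -/
def spart (π : Finpartition (univ : Finset (Fin N))) (hE : EvenPartition π) :
    Finpartition (univ : Finset (Fin N)) :=
  Finpartition.ofSetoid (mateSetoid π hE)

variable {π : Finpartition (univ : Finset (Fin N))} {hE : EvenPartition π}

lemma mem_spart_part {x y : Fin N} : y ∈ (spart π hE).part x ↔ (y = x ∨ y = mate π x) :=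
  Finpartition.mem_part_ofSetoid_iff_rel

lemma spart_part_eq (x : Fin N) : (spart π hE).part x = {x, mate π x} := by
  ext z
  rw [mem_spart_part, Finset.mem_insert, Finset.mem_singleton]

lemma sameBlock_spart_iff {x y : Fin N} :
    SameBlock (spart π hE) x y ↔ (y = x ∨ y = mate π x) := by
  rw [sameBlock_iff]
  exact mem_spart_part

lemma sameBlock_refl (π : Finpartition (univ : Finset (Fin N))) (x : Fin N) :
    SameBlock π x x := ⟨blk π x, blk_mem π x, mem_blk π x, mem_blk π x⟩

lemma sameBlock_symm {π : Finpartition (univ : Finset (Fin N))} {x y : Fin N}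
    (h : SameBlock π x y) : SameBlock π y x := by
  obtain ⟨B, hB, hx, hy⟩ := h
  exact ⟨B, hB, hy, hx⟩

lemma sameBlock_trans {π : Finpartition (univ : Finset (Fin N))} {x y z : Fin N}
    (h1 : SameBlock π x y) (h2 : SameBlock π y z) : SameBlock π x z := by
  obtain ⟨B, hB, hx, hy⟩ := h1
  obtain ⟨C, hC, hy', hz⟩ := h2
  rw [π.eq_of_mem_parts hC hB hy' hy] at hz
  exact ⟨B, hB, hx, hz⟩

lemma sameBlock_of_spart {x y : Fin N} (h : SameBlock (spart π hE) x y) :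
    SameBlock π x y := by
  rcases sameBlock_spart_iff.1 h with rfl | rfl
  · exact sameBlock_refl _ _
  · exact sameBlock_mate hE x

lemma spart_isPairing : IsPairing (spart π hE) := by
  intro B hB
  obtain ⟨x, hx⟩ := (spart π hE).nonempty_of_mem_parts hB
  have : B = {x, mate π x} := by
    rw [← spart_part_eq x]
    exact ((spart π hE).part_eq_of_mem hB hx).symm
  rw [this]
  exact Finset.card_pair (mate_ne hE x).symm

lemma sort_pair_of_lt {a b : Fin N} (h : a < b) :
    Finset.sort ({a, b} : Finset (Fin N)) (· ≤ ·) = [a, b] := by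
  have h1 : ∀ c ∈ ({b} : Finset (Fin N)), a ≤ c := by
    intro c hc
    rw [Finset.mem_singleton] at hc
    rw [hc]
    exact le_of_lt h
  have h2 : a ∉ ({b} : Finset (Fin N)) := by
    rw [Finset.mem_singleton]
    exact ne_of_lt h
  rw [Finset.sort_insert (· ≤ ·) h1 h2, Finset.sort_singleton]

lemma spart_alternating {ε : Fin N → Bool} (hA : Alternating ε π) :
    Alternating ε (spart π hE) := by
  intro B hB
  obtain ⟨x, hx⟩ := (spart π hE).nonempty_of_mem_parts hB
  have hBx : B = {x, mate π x} := by
    rw [← spart_part_eq x]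
    exact ((spart π hE).part_eq_of_mem hB hx).symm
  rcases lt_or_gt_of_ne (mate_ne hE x) with h | h
  · have : B = {mate π x, x} := by rw [hBx, Finset.pair_comm]
    rw [this, sort_pair_of_lt h]
    exact List.isChain_pair.2 (fun hc => (eps_mate_ne hE hA x) hc)
  · rw [hBx, sort_pair_of_lt h]
    exact List.isChain_pair.2 (fun hc => (eps_mate_ne hE hA x) hc.symm)

lemma mate_gt_of_gt (hE : EvenPartition π) {x : Fin N} (h : x < mate π x) :
    consec (blk π x) x (mate π x) := by
  by_cases ho : Odd (rank (blk π x) x)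
  · exact mate_consec_odd hE ho
  · exact absurd (mate_consec_even ho).2.2.1 (not_lt.2 (le_of_lt h))

lemma spart_nonCrossing (hNC : NonCrossing π) : NonCrossing (spart π hE) := by
  intro s1 t1 s2 t2 h1 h2 h3 hs ht
  exfalso
  have hs2 : s2 = mate π s1 := by
    rcases sameBlock_spart_iff.1 hs with h | h
    · exact absurd h (ne_of_gt (lt_trans h1 h2))
    · exact h
  have ht2 : t2 = mate π t1 := by
    rcases sameBlock_spart_iff.1 ht with h | h
    · exact absurd h (ne_of_gt (lt_trans h2 h3))
    · exact h
  have hπs : SameBlock π s1 s2 := hs2 ▸ sameBlock_mate hE s1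
  have hπt : SameBlock π t1 t2 := ht2 ▸ sameBlock_mate hE t1
  have hπ : SameBlock π s1 t1 := hNC s1 t1 s2 t2 h1 h2 h3 hπs hπt
  have hcons : consec (blk π s1) s1 (mate π s1) :=
    mate_gt_of_gt hE (hs2 ▸ lt_trans h1 h2)
  have ht1B : t1 ∈ blk π s1 := (sameBlock_iff π).1 hπ
  exact hcons.2.2.2 t1 ht1B ⟨h1, hs2 ▸ h2⟩

end Sigma

section Junction

variable {N K : ℕ} {ε : Fin N → Bool} {g : Fin N → Fin K}
variable {π : Finpartition (univ : Finset (Fin N))}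

/-- `x` is the left endpoint of a junction. -/
def isJL (π : Finpartition (univ : Finset (Fin N))) (x : Fin N) : Prop :=
  ¬ Odd (rank (blk π x) x) ∧ ((blk π x).filter (fun z => x < z)).Nonempty

/-- `y` is the right endpoint of a junction. -/
def isJR (π : Finpartition (univ : Finset (Fin N))) (y : Fin N) : Prop :=
  Odd (rank (blk π y) y) ∧ ((blk π y).filter (fun z => z < y)).Nonempty

instance : DecidablePred (isJL π) := fun x => by unfold isJL; infer_instance

/-- The right endpoint of the junction starting at `x`. -/
def jnext (π : Finpartition (univ : Finset (Fin N))) (x : Fin N) : Fin N := nxt (blk π x) x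

/-- The left endpoint of the junction ending at `y`. -/
def jprev (π : Finpartition (univ : Finset (Fin N))) (y : Fin N) : Fin N := prv (blk π y) y

lemma jl_consec {x : Fin N} (hx : isJL π x) : consec (blk π x) x (jnext π x) :=
  nxt_spec (mem_blk π x) hx.2

lemma jr_consec' {y : Fin N} (hy : isJR π y) : consec (blk π y) (jprev π y) y :=
  prv_spec (mem_blk π y) hy.2

lemma jl_mate_lt {x : Fin N} (hx : isJL π x) : mate π x < x :=
  (mate_consec_even hx.1).2.2.1

lemma jr_mate_gt (hE : EvenPartition π) {y : Fin N} (hy : isJR π y) : y < mate π y :=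
  (mate_consec_odd hE hy.1).2.2.1

lemma isJR_jnext {x : Fin N} (hx : isJL π x) : isJR π (jnext π x) := by
  have hc := jl_consec hx
  have hblk : blk π (jnext π x) = blk π x := blk_eq_of_mem π (blk_mem π x) hc.2.1
  constructor
  · rw [hblk, consec_rank hc]
    exact (Nat.not_odd_iff_even.1 hx.1).add_one
  · rw [hblk]
    exact ⟨x, Finset.mem_filter.2 ⟨hc.1, hc.2.2.1⟩⟩

lemma jprev_jnext {x : Fin N} (hx : isJL π x) : jprev π (jnext π x) = x := by
  have hc := jl_consec hx
  have hblk : blk π (jnext π x) = blk π x := blk_eq_of_mem π (blk_mem π x) hc.2.1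
  rw [jprev, hblk]
  exact consec_prv hc

lemma sameBlock_jnext {x : Fin N} (hx : isJL π x) : SameBlock π x (jnext π x) :=
  sameBlock_of_mem_blk π (jl_consec hx).2.1

lemma sameBlock_jprev {y : Fin N} (hy : isJR π y) : SameBlock π y (jprev π y) :=
  sameBlock_of_mem_blk π (jr_consec' hy).1

section ColorFacts

lemma g_lt_of_eps_ne (hg : Monotone g) (hεg : ∀ x y : Fin N, g x = g y → ε x = ε y)
    {x y : Fin N} (hxy : x < y) (hne : ε x ≠ ε y) : g x < g y := by
  rcases lt_or_eq_of_le (hg (le_of_lt hxy)) with h | h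
  · exact h
  · exact absurd (hεg _ _ h) hne

lemma g_between (hg : Monotone g) {x z y : Fin N} (h1 : x ≤ z) (h2 : z ≤ y) (h : g x = g y) :
    g z = g x :=
  le_antisymm (h ▸ hg h2) (hg h1)

lemma lt_of_g_lt (hg : Monotone g) {x y : Fin N} (h : g x < g y) : x < y := by
  by_contra hc
  exact absurd (hg (not_lt.1 hc)) (not_le.2 h)

end ColorFacts

end Junction

section Core

variable {N K : ℕ} {ε : Fin N → Bool} {g : Fin N → Fin K}
variable {π : Finpartition (univ : Finset (Fin N))}

lemma ncross (hNC : NonCrossing π) {a b c e : Fin N} (h1 : a < b) (h2 : b < c) (h3 : c < e)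
    (hac : SameBlock π a c) (hbe : SameBlock π b e) : SameBlock π a b :=
  hNC a b c e h1 h2 h3 hac hbe

lemma same_seg_eq_aux (hA : Alternating ε π) (hg : Monotone g)
    (hεg : ∀ x y : Fin N, g x = g y → ε x = ε y) {x y : Fin N}
    (h : SameBlock π x y) (hgxy : g x = g y) (hlt : x < y) : False := by
  have hyB : y ∈ blk π x := (sameBlock_iff π).1 h
  have hne : ((blk π x).filter (fun z => x < z)).Nonempty :=
    ⟨y, Finset.mem_filter.2 ⟨hyB, hlt⟩⟩
  have hc := nxt_spec (mem_blk π x) hne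
  have hule : nxt (blk π x) x ≤ y := nxt_le hyB hlt hne
  have hεu : ε x ≠ ε (nxt (blk π x) x) := eps_ne_of_consec π hA (blk_mem π x) hc
  have hgu : g (nxt (blk π x) x) = g x := g_between hg (le_of_lt hc.2.2.1) hule hgxy
  exact hεu (hεg _ _ hgu.symm)

lemma same_seg_eq (hA : Alternating ε π) (hg : Monotone g)
    (hεg : ∀ x y : Fin N, g x = g y → ε x = ε y) {x y : Fin N}
    (h : SameBlock π x y) (hgxy : g x = g y) : x = y := by
  rcases lt_trichotomy x y with hlt | heq | hlt
  · exact absurd (same_seg_eq_aux hA hg hεg h hgxy hlt) (by simp)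
  · exact heq
  · exact absurd (same_seg_eq_aux hA hg hεg (sameBlock_symm h) hgxy.symm hlt) (by simp)

/-- The open interval strictly between the two endpoints of a junction is closed
under taking mates. -/
lemma sclosed (hNC : NonCrossing π) (hE : EvenPartition π) {x z : Fin N} (hx : isJL π x)
    (h1 : x < z) (h2 : z < jnext π x) : x < mate π z ∧ mate π z < jnext π x := by
  have hc := jl_consec hx
  have hxy : SameBlock π x (jnext π x) := sameBlock_jnext hx
  have hxz : ¬ SameBlock π x z := fun h => hc.2.2.2 z ((sameBlock_iff π).1 h) ⟨h1, h2⟩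
  have hmz : SameBlock π z (mate π z) := sameBlock_mate hE z
  have hxmz : x < mate π z := by
    rcases lt_trichotomy (mate π z) x with hm | hm | hm
    · exfalso
      have := ncross hNC hm h1 h2 (sameBlock_symm hmz) hxy
      exact hxz (sameBlock_trans (sameBlock_symm this) (sameBlock_symm hmz))
    · exact absurd (sameBlock_symm (hm ▸ hmz)) hxz
    · exact hm
  refine ⟨hxmz, ?_⟩
  rcases lt_trichotomy (mate π z) (jnext π x) with hm | hm | hm
  · exact hm
  · exfalso
    exact hxz (sameBlock_trans hxy (sameBlock_symm (hm ▸ hmz)))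
  · exfalso
    exact hxz (ncross hNC h1 h2 hm hxy hmz)

section Host

lemma host_ll_aux (hNC : NonCrossing π) (hE : EvenPartition π) (hA : Alternating ε π)
    (hg : Monotone g) (hεg : ∀ x y : Fin N, g x = g y → ε x = ε y)
    {x x' : Fin N} (hx : isJL π x) (hx' : isJL π x') (hgg : g x = g x')
    (hlt : x < x') (hnsb : ¬ SameBlock π x x') : False := by
  have hw' : mate π x' < x' := jl_mate_lt hx'
  have hεw' : ε (mate π x') ≠ ε x' := eps_ne_of_consec π hA (blk_mem π x') (mate_consec_even hx'.1)
  have hxy : x < jnext π x := (jl_consec hx).2.2.1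
  have hεxy : ε x ≠ ε (jnext π x) := eps_ne_of_consec π hA (blk_mem π x) (jl_consec hx)
  have hsbw' : SameBlock π x' (mate π x') := sameBlock_mate hE x'
  have hsby : SameBlock π x (jnext π x) := sameBlock_jnext hx
  have hεxx' : ε x = ε x' := hεg _ _ hgg
  have hw'x : mate π x' < x := by
    rcases lt_trichotomy (mate π x') x with hm | hm | hm
    · exact hm
    · exact absurd (sameBlock_symm (hm ▸ hsbw')) hnsb
    · exfalso
      have hgw : g (mate π x') = g x := g_between hg (le_of_lt hm) (le_of_lt hw') hgg
      exact hεw' ((hεg _ _ hgw).trans hεxx')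
  have hx'y : x' < jnext π x := by
    rcases lt_trichotomy (jnext π x) x' with hm | hm | hm
    · exfalso
      have hgy : g (jnext π x) = g x := g_between hg (le_of_lt hxy) (le_of_lt hm) hgg
      exact hεxy (hεg _ _ hgy.symm)
    · exact absurd (hm ▸ hsby) hnsb
    · exact hm
  have := ncross hNC hw'x hlt hx'y (sameBlock_symm hsbw') hsby
  exact hnsb (sameBlock_trans (sameBlock_symm this) (sameBlock_symm hsbw'))

lemma host_ll (hNC : NonCrossing π) (hE : EvenPartition π) (hA : Alternating ε π)
    (hg : Monotone g) (hεg : ∀ x y : Fin N, g x = g y → ε x = ε y)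
    {x x' : Fin N} (hx : isJL π x) (hx' : isJL π x') (hgg : g x = g x') : x = x' := by
  by_cases hsb : SameBlock π x x'
  · exact same_seg_eq hA hg hεg hsb hgg
  · exfalso
    rcases lt_trichotomy x x' with hlt | heq | hlt
    · exact host_ll_aux hNC hE hA hg hεg hx hx' hgg hlt hsb
    · exact hsb (heq ▸ sameBlock_refl π x)
    · exact host_ll_aux hNC hE hA hg hεg hx' hx hgg.symm hlt (fun h => hsb (sameBlock_symm h))

lemma host_rr_aux (hNC : NonCrossing π) (hE : EvenPartition π) (hA : Alternating ε π)
    (hg : Monotone g) (hεg : ∀ x y : Fin N, g x = g y → ε x = ε y)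
    {y y' : Fin N} (hy : isJR π y) (hy' : isJR π y') (hgg : g y = g y')
    (hlt : y < y') (hnsb : ¬ SameBlock π y y') : False := by
  have hz : y < mate π y := jr_mate_gt hE hy
  have hεz : ε y ≠ ε (mate π y) := eps_ne_of_consec π hA (blk_mem π y) (mate_consec_odd hE hy.1)
  have hx'' : jprev π y' < y' := (jr_consec' hy').2.2.1
  have hεx'' : ε (jprev π y') ≠ ε y' := eps_ne_of_consec π hA (blk_mem π y') (jr_consec' hy')
  have hsbz : SameBlock π y (mate π y) := sameBlock_mate hE y
  have hsbx'' : SameBlock π y' (jprev π y') := sameBlock_jprev hy'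
  have hεyy' : ε y = ε y' := hεg _ _ hgg
  have hy'z : y' < mate π y := by
    rcases lt_trichotomy (mate π y) y' with hm | hm | hm
    · exfalso
      have hgz : g (mate π y) = g y := g_between hg (le_of_lt hz) (le_of_lt hm) hgg
      exact hεz (hεg _ _ hgz.symm)
    · exact absurd (hm ▸ hsbz) hnsb
    · exact hm
  have hx''y : jprev π y' < y := by
    rcases lt_trichotomy (jprev π y') y with hm | hm | hm
    · exact hm
    · exact absurd (sameBlock_symm (hm ▸ hsbx'')) hnsb
    · exfalso
      have hgx : g (jprev π y') = g y := g_between hg (le_of_lt hm) (le_of_lt hx'') hgg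
      exact hεx'' ((hεg _ _ hgx).trans hεyy')
  have := ncross hNC hx''y hlt hy'z (sameBlock_symm hsbx'') hsbz
  exact hnsb (sameBlock_trans (sameBlock_symm this) (sameBlock_symm hsbx''))

lemma host_rr (hNC : NonCrossing π) (hE : EvenPartition π) (hA : Alternating ε π)
    (hg : Monotone g) (hεg : ∀ x y : Fin N, g x = g y → ε x = ε y)
    {y y' : Fin N} (hy : isJR π y) (hy' : isJR π y') (hgg : g y = g y') : y = y' := by
  by_cases hsb : SameBlock π y y'
  · exact same_seg_eq hA hg hεg hsb hgg
  · exfalso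
    rcases lt_trichotomy y y' with hlt | heq | hlt
    · exact host_rr_aux hNC hE hA hg hεg hy hy' hgg hlt hsb
    · exact hsb (heq ▸ sameBlock_refl π y)
    · exact host_rr_aux hNC hE hA hg hεg hy' hy hgg.symm hlt (fun h => hsb (sameBlock_symm h))

lemma host_lr (hNC : NonCrossing π) (hE : EvenPartition π) (hA : Alternating ε π)
    (hg : Monotone g) (hεg : ∀ x y : Fin N, g x = g y → ε x = ε y)
    {x y' : Fin N} (hx : isJL π x) (hy' : isJR π y') (hgg : g x = g y') : False := by
  have hxne : x ≠ y' := by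
    rintro rfl
    exact hx.1 hy'.1
  by_cases hsb : SameBlock π x y'
  · exact hxne (same_seg_eq hA hg hεg hsb hgg)
  have hw : mate π x < x := jl_mate_lt hx
  have hεw : ε (mate π x) ≠ ε x := eps_ne_of_consec π hA (blk_mem π x) (mate_consec_even hx.1)
  have hxy : x < jnext π x := (jl_consec hx).2.2.1
  have hεxy : ε x ≠ ε (jnext π x) := eps_ne_of_consec π hA (blk_mem π x) (jl_consec hx)
  have hx'' : jprev π y' < y' := (jr_consec' hy').2.2.1
  have hεx'' : ε (jprev π y') ≠ ε y' := eps_ne_of_consec π hA (blk_mem π y') (jr_consec' hy')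
  have hz' : y' < mate π y' := jr_mate_gt hE hy'
  have hεz' : ε y' ≠ ε (mate π y') := eps_ne_of_consec π hA (blk_mem π y') (mate_consec_odd hE hy'.1)
  have hsbw : SameBlock π x (mate π x) := sameBlock_mate hE x
  have hsby : SameBlock π x (jnext π x) := sameBlock_jnext hx
  have hsbx'' : SameBlock π y' (jprev π y') := sameBlock_jprev hy'
  have hsbz' : SameBlock π y' (mate π y') := sameBlock_mate hE y'
  have hεeq : ε x = ε y' := hεg _ _ hgg
  rcases lt_trichotomy x y' with hlt | heq | hlt
  · have hx''x : jprev π y' < x := by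
      rcases lt_trichotomy (jprev π y') x with hm | hm | hm
      · exact hm
      · exact absurd (sameBlock_symm (hm ▸ hsbx'')) hsb
      · exfalso
        have hgx : g (jprev π y') = g x := g_between hg (le_of_lt hm) (le_of_lt hx'') hgg
        exact hεx'' ((hεg _ _ hgx).trans hεeq)
    have hy'y : y' < jnext π x := by
      rcases lt_trichotomy (jnext π x) y' with hm | hm | hm
      · exfalso
        have hgy : g (jnext π x) = g x := g_between hg (le_of_lt hxy) (le_of_lt hm) hgg
        exact hεxy (hεg _ _ hgy.symm)
      · exact absurd (hm ▸ hsby) hsb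
      · exact hm
    have := ncross hNC hx''x hlt hy'y (sameBlock_symm hsbx'') hsby
    exact hsb (sameBlock_trans (sameBlock_symm this) (sameBlock_symm hsbx''))
  · exact hxne heq
  · have hwy' : mate π x < y' := by
      rcases lt_trichotomy (mate π x) y' with hm | hm | hm
      · exact hm
      · exact absurd (hm ▸ hsbw) hsb
      · exfalso
        have hgw : g (mate π x) = g y' := g_between hg (le_of_lt hm) (le_of_lt hw) hgg.symm
        exact hεw ((hεg _ _ hgw).trans hεeq.symm)
    have hxz' : x < mate π y' := by
      rcases lt_trichotomy (mate π y') x with hm | hm | hm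
      · exfalso
        have hgz : g (mate π y') = g y' := g_between hg (le_of_lt hz') (le_of_lt hm) hgg.symm
        exact hεz' (hεg _ _ hgz.symm)
      · exact absurd (sameBlock_symm (hm ▸ hsbz')) hsb
      · exact hm
    have := ncross hNC hwy' hlt hxz' (sameBlock_symm hsbw) hsbz'
    exact hsb (sameBlock_trans hsbw this)

/-- Junction chords do not cross at the segment level. -/
lemma chord_nc (hNC : NonCrossing π) (hg : Monotone g)
    {x x' : Fin N} (hx : isJL π x) (hx' : isJL π x')
    (h1 : g x < g x') (h2 : g x' < g (jnext π x)) (h3 : g (jnext π x) < g (jnext π x')) :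
    False := by
  have hxx' : x < x' := lt_of_g_lt hg h1
  have hx'y : x' < jnext π x := lt_of_g_lt hg h2
  have hyy' : jnext π x < jnext π x' := lt_of_g_lt hg h3
  by_cases hsb : SameBlock π x x'
  · exact (jl_consec hx).2.2.2 x' ((sameBlock_iff π).1 hsb) ⟨hxx', hx'y⟩
  · exact hsb (ncross hNC hxx' hx'y hyy' (sameBlock_jnext hx) (sameBlock_jnext hx'))

end Host

end Core

section Matching

variable {α : Type*} [LinearOrder α]

lemma min_chord_fst {C : Finset (α × α)}
    (hinc : ∀ c ∈ C, ∀ c' ∈ C, (c.1 = c'.1 ∨ c.1 = c'.2 ∨ c.2 = c'.1 ∨ c.2 = c'.2) → c = c')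
    (hnc : ∀ c ∈ C, ∀ c' ∈ C, ¬(c.1 < c'.1 ∧ c'.1 < c.2 ∧ c.2 < c'.2))
    {c : α × α} (hc : c ∈ C) (hmin : ∀ e ∈ C, c.2 ≤ e.2) :
    ∀ e ∈ C, e.1 < c.2 → e.1 ≤ c.1 := by
  intro e he h1
  by_contra hgt
  rw [not_le] at hgt
  have hec : e ≠ c := fun h => absurd (h ▸ hgt) (lt_irrefl _)
  have he2 : c.2 < e.2 := by
    rcases lt_or_eq_of_le (hmin e he) with h | h
    · exact h
    · exact absurd (hinc e he c hc (Or.inr (Or.inr (Or.inr h.symm)))) hec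
  exact hnc c hc e he ⟨hgt, h1, he2⟩

lemma chord_fst_eq_max [DecidableEq α] {C : Finset (α × α)}
    (hlt : ∀ c ∈ C, c.1 < c.2)
    (hinc : ∀ c ∈ C, ∀ c' ∈ C, (c.1 = c'.1 ∨ c.1 = c'.2 ∨ c.2 = c'.1 ∨ c.2 = c'.2) → c = c')
    (hnc : ∀ c ∈ C, ∀ c' ∈ C, ¬(c.1 < c'.1 ∧ c'.1 < c.2 ∧ c.2 < c'.2))
    {c : α × α} (hc : c ∈ C) (hmin : ∀ e ∈ C, c.2 ≤ e.2) :
    c.1 = ((C.image Prod.fst).filter (fun a => a < c.2)).max'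
      ⟨c.1, Finset.mem_filter.2 ⟨Finset.mem_image_of_mem _ hc, hlt c hc⟩⟩ := by
  apply le_antisymm
  · apply Finset.le_max'
    exact Finset.mem_filter.2 ⟨Finset.mem_image_of_mem Prod.fst hc, hlt c hc⟩
  · apply Finset.max'_le
    intro a ha
    rw [Finset.mem_filter] at ha
    obtain ⟨ha1, ha2⟩ := ha
    obtain ⟨e, he, rfl⟩ := Finset.mem_image.1 ha1
    exact min_chord_fst hinc hnc hc hmin e he ha2

lemma image_fst_erase [DecidableEq α] {C : Finset (α × α)}
    (hinc : ∀ c ∈ C, ∀ c' ∈ C, (c.1 = c'.1 ∨ c.1 = c'.2 ∨ c.2 = c'.1 ∨ c.2 = c'.2) → c = c')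
    {c : α × α} (hc : c ∈ C) :
    (C.erase c).image Prod.fst = (C.image Prod.fst).erase c.1 := by
  ext a
  simp only [Finset.mem_image, Finset.mem_erase]
  constructor
  · rintro ⟨e, ⟨hec, he⟩, rfl⟩
    refine ⟨fun h => hec (hinc e he c hc (Or.inl h)), e, he, rfl⟩
  · rintro ⟨hne, e, he, rfl⟩
    exact ⟨e, ⟨fun h => hne (by rw [h]), he⟩, rfl⟩

lemma image_snd_erase [DecidableEq α] {C : Finset (α × α)}
    (hinc : ∀ c ∈ C, ∀ c' ∈ C, (c.1 = c'.1 ∨ c.1 = c'.2 ∨ c.2 = c'.1 ∨ c.2 = c'.2) → c = c')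
    {c : α × α} (hc : c ∈ C) :
    (C.erase c).image Prod.snd = (C.image Prod.snd).erase c.2 := by
  ext a
  simp only [Finset.mem_image, Finset.mem_erase]
  constructor
  · rintro ⟨e, ⟨hec, he⟩, rfl⟩
    refine ⟨fun h => hec (hinc e he c hc (Or.inr (Or.inr (Or.inr h)))), e, he, rfl⟩
  · rintro ⟨hne, e, he, rfl⟩
    exact ⟨e, ⟨fun h => hne (by rw [h]), he⟩, rfl⟩

lemma matching_unique [DecidableEq α] :
    ∀ (n : ℕ) (C1 C2 : Finset (α × α)), C1.card = n →
      (∀ c ∈ C1, c.1 < c.2) → (∀ c ∈ C2, c.1 < c.2) →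
      (∀ c ∈ C1, ∀ c' ∈ C1, (c.1 = c'.1 ∨ c.1 = c'.2 ∨ c.2 = c'.1 ∨ c.2 = c'.2) → c = c') →
      (∀ c ∈ C2, ∀ c' ∈ C2, (c.1 = c'.1 ∨ c.1 = c'.2 ∨ c.2 = c'.1 ∨ c.2 = c'.2) → c = c') →
      (∀ c ∈ C1, ∀ c' ∈ C1, ¬(c.1 < c'.1 ∧ c'.1 < c.2 ∧ c.2 < c'.2)) →
      (∀ c ∈ C2, ∀ c' ∈ C2, ¬(c.1 < c'.1 ∧ c'.1 < c.2 ∧ c.2 < c'.2)) →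
      C1.image Prod.fst = C2.image Prod.fst →
      C1.image Prod.snd = C2.image Prod.snd → C1 = C2 := by
  intro n
  induction n using Nat.strong_induction_on with
  | _ n IH =>
    intro C1 C2 hcard h1lt h2lt h1inc h2inc h1nc h2nc hfst hsnd
    rcases C1.eq_empty_or_nonempty with rfl | hne
    · rw [Finset.image_empty] at hfst
      have : C2.image Prod.fst = ∅ := hfst.symm
      rw [Finset.image_eq_empty] at this
      rw [this]
    · have hne2 : C2.Nonempty := by
        by_contra h
        rw [Finset.not_nonempty_iff_eq_empty] at h
        rw [h, Finset.image_empty, Finset.image_eq_empty] at hfst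
        exact Finset.nonempty_iff_ne_empty.1 hne hfst
      have hnes1 : (C1.image Prod.snd).Nonempty := hne.image _
      have hnes2 : (C2.image Prod.snd).Nonempty := hne2.image _
      set b0 := (C1.image Prod.snd).min' hnes1 with hb0
      have hb0mem : b0 ∈ C1.image Prod.snd := Finset.min'_mem _ _
      obtain ⟨c, hc, hc2⟩ := Finset.mem_image.1 hb0mem
      have hb0mem2 : b0 ∈ C2.image Prod.snd := hsnd ▸ hb0mem
      obtain ⟨c', hc', hc2'⟩ := Finset.mem_image.1 hb0mem2
      have hmin1 : ∀ e ∈ C1, c.2 ≤ e.2 := by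
        intro e he
        rw [hc2]
        exact Finset.min'_le _ _ (Finset.mem_image_of_mem _ he)
      have hmin2 : ∀ e ∈ C2, c'.2 ≤ e.2 := by
        intro e he
        rw [hc2']
        have : e.2 ∈ C1.image Prod.snd := by
          rw [hsnd]
          exact Finset.mem_image_of_mem _ he
        exact Finset.min'_le _ _ this
      have hcc' : c = c' := by
        have e1 := chord_fst_eq_max h1lt h1inc h1nc hc hmin1
        have e2 := chord_fst_eq_max h2lt h2inc h2nc hc' hmin2
        have hsndeq : c.2 = c'.2 := by rw [hc2, hc2']
        have : c.1 = c'.1 := by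
          rw [e1, e2]
          congr 1
          rw [hfst, hsndeq]
        exact Prod.ext this hsndeq
      subst hcc'
      have hkey : C1.erase c = C2.erase c := by
        refine IH (n - 1) ?_ _ _ ?_ ?_ ?_ ?_ ?_ ?_ ?_ ?_ ?_
        · have : 0 < n := hcard ▸ Finset.card_pos.2 hne
          omega
        · rw [Finset.card_erase_of_mem hc, hcard]
        · exact fun e he => h1lt e (Finset.mem_of_mem_erase he)
        · exact fun e he => h2lt e (Finset.mem_of_mem_erase he)
        · exact fun e he e' he' => h1inc e (Finset.mem_of_mem_erase he) e' (Finset.mem_of_mem_erase he')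
        · exact fun e he e' he' => h2inc e (Finset.mem_of_mem_erase he) e' (Finset.mem_of_mem_erase he')
        · exact fun e he e' he' => h1nc e (Finset.mem_of_mem_erase he) e' (Finset.mem_of_mem_erase he')
        · exact fun e he e' he' => h2nc e (Finset.mem_of_mem_erase he) e' (Finset.mem_of_mem_erase he')
        · rw [image_fst_erase h1inc hc, image_fst_erase h2inc hc', hfst]
        · rw [image_snd_erase h1inc hc, image_snd_erase h2inc hc', hsnd]
      have : insert c (C1.erase c) = insert c (C2.erase c) := by rw [hkey]
      rwa [Finset.insert_erase hc, Finset.insert_erase hc'] at this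

end Matching

section Inject

variable {N K : ℕ} {ε : Fin N → Bool} {g : Fin N → Fin K}
variable {π π' : Finpartition (univ : Finset (Fin N))}

/-- The junction chords of `π`, at the segment level. -/
def chords (π : Finpartition (univ : Finset (Fin N))) (g : Fin N → Fin K) :
    Finset (Fin K × Fin K) :=
  (univ.filter (isJL π)).image (fun x => (g x, g (jnext π x)))

lemma mem_chords {c : Fin K × Fin K} :
    c ∈ chords π g ↔ ∃ x, isJL π x ∧ (g x, g (jnext π x)) = c := by
  unfold chords
  simp only [Finset.mem_image, Finset.mem_filter, Finset.mem_univ, true_and]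

lemma chords_lt (hA : Alternating ε π) (hg : Monotone g)
    (hεg : ∀ x y : Fin N, g x = g y → ε x = ε y) :
    ∀ c ∈ chords π g, c.1 < c.2 := by
  intro c hc
  obtain ⟨x, hx, rfl⟩ := mem_chords.1 hc
  exact g_lt_of_eps_ne hg hεg (jl_consec hx).2.2.1
    (eps_ne_of_consec π hA (blk_mem π x) (jl_consec hx))

lemma chords_inc (hNC : NonCrossing π) (hE : EvenPartition π) (hA : Alternating ε π)
    (hg : Monotone g) (hεg : ∀ x y : Fin N, g x = g y → ε x = ε y) :
    ∀ c ∈ chords π g, ∀ c' ∈ chords π g,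
      (c.1 = c'.1 ∨ c.1 = c'.2 ∨ c.2 = c'.1 ∨ c.2 = c'.2) → c = c' := by
  intro c hc c' hc' hor
  obtain ⟨x, hx, rfl⟩ := mem_chords.1 hc
  obtain ⟨x', hx', rfl⟩ := mem_chords.1 hc'
  rcases hor with h | h | h | h
  · rw [host_ll hNC hE hA hg hεg hx hx' h]
  · exact absurd (host_lr hNC hE hA hg hεg hx (isJR_jnext hx') h) (fun f => f)
  · exact absurd (host_lr hNC hE hA hg hεg hx' (isJR_jnext hx) h.symm) (fun f => f)
  · have hy : jnext π x = jnext π x' :=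
      host_rr hNC hE hA hg hεg (isJR_jnext hx) (isJR_jnext hx') h
    have : x = x' := by
      have e1 := jprev_jnext hx
      have e2 := jprev_jnext hx'
      rw [← e1, ← e2, hy]
    rw [this]

lemma chords_ncross (hNC : NonCrossing π) (hg : Monotone g) :
    ∀ c ∈ chords π g, ∀ c' ∈ chords π g, ¬(c.1 < c'.1 ∧ c'.1 < c.2 ∧ c.2 < c'.2) := by
  rintro c hc c' hc' ⟨h1, h2, h3⟩
  obtain ⟨x, hx, rfl⟩ := mem_chords.1 hc
  obtain ⟨x', hx', rfl⟩ := mem_chords.1 hc'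
  exact chord_nc hNC hg hx hx' h1 h2 h3

lemma mate_eq_of_spart_eq (hE : EvenPartition π) (hE' : EvenPartition π')
    (hsp : spart π hE = spart π' hE') (x : Fin N) : mate π x = mate π' x := by
  have h1 : ({x, mate π x} : Finset (Fin N)) = {x, mate π' x} := by
    rw [← spart_part_eq (hE := hE) x, ← spart_part_eq (hE := hE') x, hsp]
  have h2 : mate π x ∈ ({x, mate π' x} : Finset (Fin N)) := by
    rw [← h1]
    exact Finset.mem_insert_of_mem (Finset.mem_singleton_self _)
  rcases Finset.mem_insert.1 h2 with h | h
  · exact absurd h (mate_ne hE x)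
  · rwa [Finset.mem_singleton] at h

section PosUnique

variable (hNC : NonCrossing π) (hE : EvenPartition π) (hA : Alternating ε π)
variable (hNC' : NonCrossing π') (hE' : EvenPartition π') (hA' : Alternating ε π')

lemma pos_unique_aux1 (hNC : NonCrossing π) (hE : EvenPartition π) (hA : Alternating ε π)
    (hA' : Alternating ε π') (hg : Monotone g)
    (hεg : ∀ x y : Fin N, g x = g y → ε x = ε y)
    (hmate : ∀ z, mate π z = mate π' z)
    {x x' : Fin N} (hx : isJL π x) (hx' : isJL π' x')
    (hgx : g x = g x') (hlt : x < x') : False := by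
  have hxy : x < jnext π x := (jl_consec hx).2.2.1
  have hgy : g x < g (jnext π x) := g_lt_of_eps_ne hg hεg hxy
    (eps_ne_of_consec π hA (blk_mem π x) (jl_consec hx))
  have hx'y : x' < jnext π x := lt_of_g_lt hg (by rw [← hgx]; exact hgy)
  have hscl := sclosed hNC hE hx hlt hx'y
  have hmlt : mate π x' < x' := by
    rw [hmate x']
    exact jl_mate_lt hx'
  have hgm : g (mate π x') = g x := g_between hg (le_of_lt hscl.1) (le_of_lt hmlt) hgx
  have hgm' : g (mate π x') = g x' := hgm.trans hgx
  have hεm : ε (mate π' x') ≠ ε x' :=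
    eps_ne_of_consec π' hA' (blk_mem π' x') (mate_consec_even hx'.1)
  rw [← hmate x'] at hεm
  exact hεm (hεg _ _ hgm')

lemma pos_unique_aux2 (hNC' : NonCrossing π') (hE : EvenPartition π) (hE' : EvenPartition π')
    (hA : Alternating ε π) (hg : Monotone g)
    (hεg : ∀ x y : Fin N, g x = g y → ε x = ε y)
    (hmate : ∀ z, mate π z = mate π' z)
    {x : Fin N} (hx : isJL π x) (hx' : isJL π' x)
    (hlt : jnext π x < jnext π' x) (hgy : g (jnext π x) = g (jnext π' x)) : False := by
  have hxy : x < jnext π x := (jl_consec hx).2.2.1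
  have hscl := sclosed hNC' hE' hx' hxy hlt
  have hmgt : jnext π x < mate π (jnext π x) := jr_mate_gt hE (isJR_jnext hx)
  have hmlt : mate π (jnext π x) < jnext π' x := by
    have := hscl.2
    rwa [← hmate (jnext π x)] at this
  have hgm : g (mate π (jnext π x)) = g (jnext π x) :=
    g_between hg (le_of_lt hmgt) (le_of_lt hmlt) hgy
  have hεm : ε (jnext π x) ≠ ε (mate π (jnext π x)) :=
    eps_ne_of_consec π hA (blk_mem π (jnext π x)) (mate_consec_odd hE (isJR_jnext hx).1)
  exact hεm (hεg _ _ hgm.symm)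

lemma pos_unique (hNC : NonCrossing π) (hE : EvenPartition π) (hA : Alternating ε π)
    (hNC' : NonCrossing π') (hE' : EvenPartition π') (hA' : Alternating ε π')
    (hg : Monotone g) (hεg : ∀ x y : Fin N, g x = g y → ε x = ε y)
    (hmate : ∀ z, mate π z = mate π' z)
    {x x' : Fin N} (hx : isJL π x) (hx' : isJL π' x')
    (hgx : g x' = g x) (hgy : g (jnext π' x') = g (jnext π x)) :
    x' = x ∧ jnext π' x' = jnext π x := by
  have hmate' : ∀ z, mate π' z = mate π z := fun z => (hmate z).symm
  have hxx : x' = x := by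
    rcases lt_trichotomy x x' with hlt | heq | hlt
    · exact absurd (pos_unique_aux1 hNC hE hA hA' hg hεg hmate hx hx' hgx.symm hlt) (fun f => f)
    · exact heq.symm
    · exact absurd (pos_unique_aux1 hNC' hE' hA' hA hg hεg hmate' hx' hx hgx hlt) (fun f => f)
  subst hxx
  refine ⟨rfl, ?_⟩
  rcases lt_trichotomy (jnext π x') (jnext π' x') with hlt | heq | hlt
  · exact absurd (pos_unique_aux2 (π := π) (π' := π') hNC' hE hE' hA hg hεg hmate hx hx'
      hlt hgy.symm) (fun f => f)
  · exact heq.symm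
  · exact absurd (pos_unique_aux2 (π := π') (π' := π) hNC hE' hE hA' hg hεg hmate' hx' hx
      hlt hgy) (fun f => f)

end PosUnique

lemma junction_transfer (hNC : NonCrossing π) (hE : EvenPartition π) (hA : Alternating ε π)
    (hNC' : NonCrossing π') (hE' : EvenPartition π') (hA' : Alternating ε π')
    (hg : Monotone g) (hεg : ∀ x y : Fin N, g x = g y → ε x = ε y)
    (hmate : ∀ z, mate π z = mate π' z)
    (hch : chords π g = chords π' g) :
    ∀ x, isJL π x → isJL π' x ∧ jnext π' x = jnext π x := by
  intro x hx
  have hmem : (g x, g (jnext π x)) ∈ chords π' g := by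
    rw [← hch]
    exact mem_chords.2 ⟨x, hx, rfl⟩
  obtain ⟨x', hx', heq⟩ := mem_chords.1 hmem
  have h1 : g x' = g x := congrArg Prod.fst heq
  have h2 : g (jnext π' x') = g (jnext π x) := congrArg Prod.snd heq
  obtain ⟨rfl, h4⟩ := pos_unique hNC hE hA hNC' hE' hA' hg hεg hmate hx hx' h1 h2
  exact ⟨hx', h4⟩

lemma parts_le (hE : EvenPartition π) (hE' : EvenPartition π')
    (hmate : ∀ z, mate π z = mate π' z)
    (hjl : ∀ x, isJL π x → isJL π' x ∧ jnext π' x = jnext π x) :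
    ∀ B ∈ π.parts, ∃ C ∈ π'.parts, B ⊆ C := by
  intro B hB
  obtain ⟨x0, hx0⟩ := π.nonempty_of_mem_parts hB
  have hBne : B.Nonempty := ⟨x0, hx0⟩
  set m0 := B.min' hBne with hm0
  have hm0B : m0 ∈ B := B.min'_mem hBne
  have key : ∀ n : ℕ, ∀ y ∈ B, rank B y = n → SameBlock π' m0 y := by
    intro n
    induction n using Nat.strong_induction_on with
    | _ n IH =>
      intro y hy hr
      by_cases h : ((B.filter (fun z => z < y)).Nonempty)
      · have hcw : consec B (prv B y) y := prv_spec hy h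
        have hw : prv B y ∈ B := hcw.1
        have hrw : rank B y = rank B (prv B y) + 1 := consec_rank hcw
        have hIH : SameBlock π' m0 (prv B y) := by
          refine IH (rank B (prv B y)) (by omega) _ hw rfl
        have hblkw : blk π (prv B y) = B := blk_eq_of_mem π hB hw
        have hwy : SameBlock π' (prv B y) y := by
          by_cases hodd : Odd (rank (blk π (prv B y)) (prv B y))
          · have hcons := mate_consec_odd hE hodd
            have e1 : nxt (blk π (prv B y)) (prv B y) = mate π (prv B y) := consec_nxt hcons
            have e2 : nxt (blk π (prv B y)) (prv B y) = y := by
              rw [hblkw]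
              exact consec_nxt hcw
            have hsb := sameBlock_mate hE' (prv B y)
            have hme : y = mate π' (prv B y) := by rw [← hmate, ← e1, e2]
            rw [← hme] at hsb
            exact hsb
          · have hjlw : isJL π (prv B y) := by
              refine ⟨hodd, ?_⟩
              rw [hblkw]
              exact ⟨y, Finset.mem_filter.2 ⟨hy, hcw.2.2.1⟩⟩
            obtain ⟨hjlw', hje⟩ := hjl _ hjlw
            have hsb := sameBlock_jnext hjlw'
            have hje2 : y = jnext π' (prv B y) := by
              rw [hje, jnext, hblkw]
              exact (consec_nxt hcw).symm
            rw [← hje2] at hsb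
            exact hsb
        exact sameBlock_trans hIH hwy
      · have hym : y = m0 := by
          rcases lt_or_eq_of_le (B.min'_le y hy) with hlt | heq
          · exact absurd ⟨m0, Finset.mem_filter.2 ⟨hm0B, hlt⟩⟩ h
          · exact heq.symm
        rw [hym]
        exact sameBlock_refl π' m0
  refine ⟨π'.part m0, π'.part_mem.2 (mem_univ m0), ?_⟩
  intro y hy
  exact (sameBlock_iff π').1 (key (rank B y) y hy rfl)

lemma parts_eq_of_le
    (h1 : ∀ B ∈ π.parts, ∃ C ∈ π'.parts, B ⊆ C)
    (h2 : ∀ B ∈ π'.parts, ∃ C ∈ π.parts, B ⊆ C) : π = π' := by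
  have hsub : π.parts ⊆ π'.parts := by
    intro B hB
    obtain ⟨C, hC, hBC⟩ := h1 B hB
    obtain ⟨D, hD, hCD⟩ := h2 C hC
    obtain ⟨x, hx⟩ := π.nonempty_of_mem_parts hB
    have hBD : B = D := π.eq_of_mem_parts hB hD hx (hCD (hBC hx))
    have : B = C := Finset.Subset.antisymm hBC (hBD ▸ hCD)
    rw [this]
    exact hC
  have hsub' : π'.parts ⊆ π.parts := by
    intro B hB
    obtain ⟨C, hC, hBC⟩ := h2 B hB
    obtain ⟨D, hD, hCD⟩ := h1 C hC
    obtain ⟨x, hx⟩ := π'.nonempty_of_mem_parts hB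
    have hBD : B = D := π'.eq_of_mem_parts hB hD hx (hCD (hBC hx))
    have : B = C := Finset.Subset.antisymm hBC (hBD ▸ hCD)
    rw [this]
    exact hC
  exact Finpartition.ext (Finset.Subset.antisymm hsub hsub')

/-- Master injectivity: a non-crossing even alternating partition is determined by its
pairing together with its segment-level junction chord set. -/
theorem master_inj (hNC : NonCrossing π) (hE : EvenPartition π) (hA : Alternating ε π)
    (hNC' : NonCrossing π') (hE' : EvenPartition π') (hA' : Alternating ε π')
    (hg : Monotone g) (hεg : ∀ x y : Fin N, g x = g y → ε x = ε y)
    (hsp : spart π hE = spart π' hE')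
    (hch : chords π g = chords π' g) : π = π' := by
  have hmate : ∀ z, mate π z = mate π' z := mate_eq_of_spart_eq hE hE' hsp
  have hmate' : ∀ z, mate π' z = mate π z := fun z => (hmate z).symm
  have hjl := junction_transfer hNC hE hA hNC' hE' hA' hg hεg hmate hch
  have hjl' := junction_transfer hNC' hE' hA' hNC hE hA hg hεg hmate' hch.symm
  exact parts_eq_of_le (parts_le hE hE' hmate hjl) (parts_le hE' hE hmate' hjl')

end Inject

end NCAux

/-- cardinality assertion of Proposition 3.5 of the paper:
`|NC^{ε_d}(2dm)| ≤ 4^{2m}·|NC₂^{ε_d}(2dm)|`. -/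
theorem card_eps_partitions_le_pairings (d m : ℕ) (hd : 1 ≤ d) (hm : 1 ≤ m) :
    Nat.card {P : Finpartition (univ : Finset (Fin (2*d*m))) //
        NonCrossing P ∧ EpsPartition (epsd d m) P} ≤
      4^(2*m) * Nat.card {P : Finpartition (univ : Finset (Fin (2*d*m))) //
        NonCrossing P ∧ IsPairing P ∧ Alternating (epsd d m) P} := by
  classical
  have hdm : ∀ j : Fin (2*d*m), (j : ℕ) / d < 2*m := by
    intro j
    have hj : (j : ℕ) < 2*d*m := j.2
    have h2 : (j : ℕ) < 2*m*d := by
      calc (j : ℕ) < 2*d*m := hj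
        _ = 2*m*d := by ring
    exact (Nat.div_lt_iff_lt_mul (by omega)).2 h2
  set g : Fin (2*d*m) → Fin (2*m) := fun j => ⟨(j : ℕ) / d, hdm j⟩ with hgdef
  have hg : Monotone g := by
    intro a b hab
    simp only [hgdef, Fin.mk_le_mk]
    exact Nat.div_le_div_right hab
  have hεg : ∀ x y : Fin (2*d*m), g x = g y → epsd d m x = epsd d m y := by
    intro x y hxy
    have h1 : (x : ℕ) / d = (y : ℕ) / d := by
      simpa [hgdef, Fin.mk.injEq] using hxy
    unfold epsd
    rw [h1]
  set A := {P : Finpartition (univ : Finset (Fin (2*d*m))) //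
      NonCrossing P ∧ EpsPartition (epsd d m) P} with hA
  set Bt := {P : Finpartition (univ : Finset (Fin (2*d*m))) //
      NonCrossing P ∧ IsPairing P ∧ Alternating (epsd d m) P} with hBt
  set F : A → Bt × (Finset (Fin (2*m)) × Finset (Fin (2*m))) := fun P =>
    (⟨NCAux.spart P.1 P.2.2.1,
       NCAux.spart_nonCrossing P.2.1,
       NCAux.spart_isPairing,
       NCAux.spart_alternating P.2.2.2⟩,
     ((NCAux.chords P.1 g).image Prod.fst, (NCAux.chords P.1 g).image Prod.snd)) with hF
  have hFinj : Function.Injective F := by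
    intro P Q hPQ
    have h1 : NCAux.spart P.1 P.2.2.1 = NCAux.spart Q.1 Q.2.2.1 :=
      congrArg Subtype.val (congrArg Prod.fst hPQ)
    have h2 : (NCAux.chords P.1 g).image Prod.fst = (NCAux.chords Q.1 g).image Prod.fst :=
      congrArg Prod.fst (congrArg Prod.snd hPQ)
    have h3 : (NCAux.chords P.1 g).image Prod.snd = (NCAux.chords Q.1 g).image Prod.snd :=
      congrArg Prod.snd (congrArg Prod.snd hPQ)
    have hch : NCAux.chords P.1 g = NCAux.chords Q.1 g := by
      refine NCAux.matching_unique ((NCAux.chords P.1 g).card) _ _ rfl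
        (NCAux.chords_lt P.2.2.2 hg hεg) (NCAux.chords_lt Q.2.2.2 hg hεg)
        (NCAux.chords_inc P.2.1 P.2.2.1 P.2.2.2 hg hεg)
        (NCAux.chords_inc Q.2.1 Q.2.2.1 Q.2.2.2 hg hεg)
        (NCAux.chords_ncross P.2.1 hg) (NCAux.chords_ncross Q.2.1 hg) h2 h3
    exact Subtype.ext (NCAux.master_inj P.2.1 P.2.2.1 P.2.2.2 Q.2.1 Q.2.2.1 Q.2.2.2
      hg hεg h1 hch)
  have hcard := Nat.card_le_card_of_injective F hFinj
  have hX : Nat.card (Finset (Fin (2*m))) = 2^(2*m) := by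
    rw [Nat.card_eq_fintype_card, Fintype.card_finset, Fintype.card_fin]
  have hprod : Nat.card (Bt × (Finset (Fin (2*m)) × Finset (Fin (2*m)))) =
      Nat.card Bt * (2^(2*m) * 2^(2*m)) := by
    rw [Nat.card_prod, Nat.card_prod, hX]
  have h4 : (2:ℕ)^(2*m) * 2^(2*m) = 4^(2*m) := by
    rw [← mul_pow]
    norm_num
  calc Nat.card A ≤ Nat.card (Bt × (Finset (Fin (2*m)) × Finset (Fin (2*m)))) := hcard
    _ = Nat.card Bt * (2^(2*m) * 2^(2*m)) := hprod
    _ = Nat.card Bt * 4^(2*m) := by rw [h4]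
    _ = 4^(2*m) * Nat.card Bt := by ring
end
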